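/- arXiv:2206.14454 — 2 statements merged into one kernel-verified Lean document; each statement's English description precedes it below -/
import Mathlib

section
/- Let μ be a positive Borel measure on 𝔻 such that S_μ is compact on H², let (I_n)_{n≥1} be an enumeration of the dyadic arcs such that (μ(W(I_n))/|I_n|)_{n≥1} is nonincreasing, and let (z_n)_{n≥1} be points with z_n ∈ R(I_n). Fix n ≥ 1 and set μ_n = Σ_{k≥n} μ(R(I_k)) δ_{z_k}. Then sup_{j≥1} μ_n(W(I_j))/|I_j| ≤ τ_n(μ) = μ(W(I_n))/|I_n|. -/
open MeasureTheory Complex Set Filter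

noncomputable section

/-- The open unit disc `𝔻` in `ℂ`. -/
def unitDisc : Set ℂ := Metric.ball 0 1

/-- The normalized area (Lebesgue) measure `m` on `ℂ` (so that `m(𝔻) = 1`). -/
def mA : Measure ℂ := (ENNReal.ofReal Real.pi)⁻¹ • (volume : Measure ℂ)

/-- `z/|z|` belongs to the dyadic arc `I_{n,k} = {e^{iθ} : 2πk/2ⁿ ≤ θ < 2π(k+1)/2ⁿ}`. -/
def onArc (n k : ℕ) (z : ℂ) : Prop :=
  ∃ θ : ℝ, 2 * Real.pi * k / 2 ^ n ≤ θ ∧ θ < 2 * Real.pi * (k + 1) / 2 ^ n ∧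
    z = (‖z‖ : ℂ) * Complex.exp (θ * Complex.I)

/-- The Carleson window `W(I_{n,k})` (note `|I_{n,k}|/2π = 2⁻ⁿ`). -/
def Wwin (n k : ℕ) : Set ℂ :=
  {z | z ∈ unitDisc ∧ 1 - ‖z‖ ≤ (1 / 2 : ℝ) ^ n ∧ onArc n k z}

/-- The inner half `R(I_{n,k})` of the Carleson window. -/
def Rwin (n k : ℕ) : Set ℂ :=
  {z | z ∈ unitDisc ∧ (1 / 2 : ℝ) ^ n / 2 < 1 - ‖z‖ ∧
    1 - ‖z‖ ≤ (1 / 2 : ℝ) ^ n ∧ onArc n k z}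

/-- The arclength `|I_{n,k}| = 2π/2ⁿ` of a dyadic arc of generation `n`. -/
def arcLen (n : ℕ) : ℝ := 2 * Real.pi / 2 ^ n

/-- The index set of the dyadic arcs: `n ≥ 1`, `1 ≤ k ≤ 2ⁿ`. -/
def dyadicSet : Set (ℕ × ℕ) := {p | 1 ≤ p.1 ∧ 1 ≤ p.2 ∧ p.2 ≤ 2 ^ p.1}

/-- The `n`-th singular value (`n ≥ 1`) of an operator, defined as the `n`-th approximation
number `s_n(T) = inf {‖T - F‖ : rank F < n}`; for a compact operator between Hilbert spaces
this coincides with the `n`-th singular value (nonincreasing ordering). -/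
def sValue {H K : Type} [NormedAddCommGroup H] [NormedSpace ℂ H]
    [NormedAddCommGroup K] [NormedSpace ℂ K] (T : H →L[ℂ] K) (n : ℕ) : ℝ :=
  sInf {c : ℝ | ∃ F : H →L[ℂ] K,
    (∃ s : Finset K, s.card < n ∧
      LinearMap.range (F : H →ₗ[ℂ] K) ≤ Submodule.span ℂ (s : Set K)) ∧ c = ‖T - F‖}

/-- The set function `m_g(S) = ∫_S |g'(z)|²(1-|z|²)² dm(z)`. -/
def mgMeas (g : ℂ → ℂ) (S : Set ℂ) : ℝ :=
  ∫ z in S, ‖deriv g z‖ ^ 2 * (1 - ‖z‖ ^ 2) ^ 2 ∂mA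

/-- The set function `ν_g(S) = ∫_S |g'(z)|²(1-|z|²) dm(z)`. -/
def nuMeas (g : ℂ → ℂ) (S : Set ℂ) : ℝ :=
  ∫ z in S, ‖deriv g z‖ ^ 2 * (1 - ‖z‖ ^ 2) ∂mA

/-- The mean of `|F|²` on the circle of radius `r`. -/
def circleAvgSq (F : ℂ → ℂ) (r : ℝ) : ℝ :=
  (2 * Real.pi)⁻¹ *
    ∫ θ in (0:ℝ)..(2 * Real.pi), ‖F ((r : ℂ) * Complex.exp (θ * Complex.I))‖ ^ 2

/-- Membership in the Hardy space `H²`: analytic on `𝔻` with bounded circle means of `|F|²`. -/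
def memH2 (F : ℂ → ℂ) : Prop :=
  DifferentiableOn ℂ F unitDisc ∧
    BddAbove (Set.range fun r : Set.Ioo (0:ℝ) 1 => circleAvgSq F (r : ℝ))

/-- The `H²` norm squared: `sup_{0<r<1}` of the circle means of `|F|²`. -/
def hardyNormSq (F : ℂ → ℂ) : ℝ := ⨆ r : Set.Ioo (0:ℝ) 1, circleAvgSq F (r : ℝ)

/-- The Möbius automorphism `φ_w(z) = (w - z)/(1 - w̄ z)` of the unit disc. -/
def moebius (w z : ℂ) : ℂ := (w - z) / (1 - (starRingEnd ℂ) w * z)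

/-- `g ∈ VMOA`: `g ∈ H²` and `‖g ∘ φ_w‖_{H²} → 0` as `|w| → 1⁻`. -/
def memVMOA (g : ℂ → ℂ) : Prop :=
  memH2 g ∧ ∀ ε : ℝ, 0 < ε → ∃ ρ ∈ Set.Ioo (0:ℝ) 1, ∀ w ∈ unitDisc,
    ρ < ‖w‖ → hardyNormSq (fun z => g (moebius w z)) < ε

/-- `g` belongs to the little Bloch space `𝓑₀`. -/
def littleBloch (g : ℂ → ℂ) : Prop :=
  DifferentiableOn ℂ g unitDisc ∧ ∀ ε : ℝ, 0 < ε → ∃ ρ ∈ Set.Ioo (0:ℝ) 1, ∀ z ∈ unitDisc,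
    ρ < ‖z‖ → (1 - ‖z‖ ^ 2) * ‖deriv g z‖ < ε

def dyI (g a : ℕ) : Set ℝ := Set.Ico ((a : ℝ) / 2 ^ g) (((a : ℝ) + 1) / 2 ^ g)

def tval (z : ℂ) : ℝ := Int.fract (Complex.arg z / (2 * Real.pi))

lemma two_pow_pos' (g : ℕ) : (0:ℝ) < 2 ^ g := by positivity

lemma mem_dyI_nonneg {g a : ℕ} {t : ℝ} (ht : t ∈ dyI g a) : 0 ≤ t :=
  le_trans (by positivity) ht.1

lemma mem_dyI_iff {g a : ℕ} {t : ℝ} (ht : 0 ≤ t) : t ∈ dyI g a ↔ ⌊t * 2 ^ g⌋₊ = a := by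
  rw [Nat.floor_eq_iff (by positivity), dyI, Set.mem_Ico, div_le_iff₀ (two_pow_pos' g),
    lt_div_iff₀ (two_pow_pos' g)]

lemma dyI_self_mem (g a : ℕ) : ((a:ℝ)/2^g) ∈ dyI g a := by
  refine ⟨le_refl _, ?_⟩
  have h := two_pow_pos' g
  rw [div_lt_div_iff₀ h h]
  nlinarith

lemma floor_key {h g : ℕ} (hh : h ≤ g) {s : ℝ} (hs : 0 ≤ s) :
    ⌊s * 2 ^ h⌋₊ = ⌊s * 2 ^ g⌋₊ / 2 ^ (g - h) := by
  have hpow : (2:ℝ) ^ g = 2 ^ h * 2 ^ (g - h) := by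
    rw [← pow_add]; congr 1; omega
  have heq : s * 2 ^ h = (s * 2 ^ g) / ((2 ^ (g - h) : ℕ) : ℝ) := by
    push_cast
    rw [hpow]
    field_simp
  rw [heq, Nat.floor_div_natCast]

lemma dyI_subset {g h a b : ℕ} (hh : h ≤ g) (hne : (dyI g a ∩ dyI h b).Nonempty) :
    dyI g a ⊆ dyI h b := by
  obtain ⟨t, ht1, ht2⟩ := hne
  have ht0 : 0 ≤ t := mem_dyI_nonneg ht1
  have ha : ⌊t * 2 ^ g⌋₊ = a := (mem_dyI_iff ht0).1 ht1
  have hb : ⌊t * 2 ^ h⌋₊ = b := (mem_dyI_iff ht0).1 ht2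
  intro s hs
  have hs0 : 0 ≤ s := mem_dyI_nonneg hs
  have hsa : ⌊s * 2 ^ g⌋₊ = a := (mem_dyI_iff hs0).1 hs
  rw [mem_dyI_iff hs0, floor_key hh hs0, hsa, ← hb, floor_key hh ht0, ha]

lemma dyI_subset_gen {g h a b : ℕ} (hsub : dyI g a ⊆ dyI h b) : h ≤ g := by
  by_contra hc
  push_neg at hc
  have hx : ((a:ℝ)/2^g) ∈ dyI g a := dyI_self_mem g a
  have hx0 : (0:ℝ) ≤ (a:ℝ)/2^g := mem_dyI_nonneg hx
  have hlt : (1:ℝ)/2^h < 1/2^g := by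
    apply div_lt_div_of_pos_left one_pos (two_pow_pos' g)
    exact pow_lt_pow_right₀ one_lt_two hc
  have hx' : ((a:ℝ)/2^g + 1/2^h) ∈ dyI g a := by
    refine ⟨le_trans hx.1 (le_add_of_nonneg_right (by positivity)), ?_⟩
    have : (a:ℝ)/2^g + 1/2^g = ((a:ℝ)+1)/2^g := by ring
    have h2 := hx.2
    linarith
  have hb1 : ⌊((a:ℝ)/2^g) * 2 ^ h⌋₊ = b := (mem_dyI_iff hx0).1 (hsub hx)
  have hb2 : ⌊((a:ℝ)/2^g + 1/2^h) * 2 ^ h⌋₊ = b := (mem_dyI_iff (by positivity)).1 (hsub hx')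
  have heq : ((a:ℝ)/2^g + 1/2^h) * 2^h = ((a:ℝ)/2^g) * 2^h + 1 := by
    field_simp
  rw [heq, Nat.floor_add_one (by positivity), hb1] at hb2
  omega

lemma dyI_same {g a b : ℕ} (hne : (dyI g a ∩ dyI g b).Nonempty) : a = b := by
  obtain ⟨t, ht1, ht2⟩ := hne
  have ht0 : 0 ≤ t := mem_dyI_nonneg ht1
  rw [← (mem_dyI_iff ht0).1 ht1, ← (mem_dyI_iff ht0).1 ht2]

lemma vol_dyI (g a : ℕ) : volume (dyI g a) = ENNReal.ofReal (1 / 2 ^ g) := by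
  rw [dyI, Real.volume_Ico]
  congr 1
  ring

lemma measurableSet_dyI (g a : ℕ) : MeasurableSet (dyI g a) := measurableSet_Ico

lemma tval_nonneg (z : ℂ) : 0 ≤ tval z := Int.fract_nonneg _
lemma tval_lt_one (z : ℂ) : tval z < 1 := Int.fract_lt_one _

lemma measurable_tval : Measurable tval := (Complex.measurable_arg.div_const _).fract

lemma texp (z : ℂ) :
    (‖z‖ : ℂ) * Complex.exp ((2 * Real.pi * tval z : ℝ) * Complex.I) = z := by
  have hπ : (0:ℝ) < 2 * Real.pi := by positivity
  have h1 : (2 * Real.pi * tval z : ℝ) =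
      Complex.arg z - (⌊Complex.arg z / (2*Real.pi)⌋ : ℤ) * (2 * Real.pi) := by
    rw [tval, Int.fract]
    field_simp
  have h2 : ((2 * Real.pi * tval z : ℝ) : ℂ) * Complex.I
      = (Complex.arg z : ℂ) * Complex.I +
        (↑(-⌊Complex.arg z / (2*Real.pi)⌋) : ℤ) * (2 * (Real.pi:ℂ) * Complex.I) := by
    rw [h1]
    push_cast
    ring
  rw [h2, Complex.exp_add, Complex.exp_int_mul_two_pi_mul_I, mul_one,
    Complex.norm_mul_exp_arg_mul_I]

lemma onArc_iff {g k : ℕ} (hg : 1 ≤ g) (hk1 : 1 ≤ k) (hk2 : k ≤ 2 ^ g) {z : ℂ} (hz : z ≠ 0) :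
    onArc g k z ↔ tval z ∈ dyI g (k % 2 ^ g) := by
  have hπ : 0 < Real.pi := Real.pi_pos
  have hp : (0:ℝ) < 2 ^ g := two_pow_pos' g
  have hs0 : 0 ≤ tval z := tval_nonneg z
  have hs1 : tval z < 1 := tval_lt_one z
  have h2g : (2:ℝ) ≤ 2 ^ g := by
    have := pow_le_pow_right₀ (by norm_num : (1:ℝ) ≤ 2) hg
    simpa using this
  constructor
  · rintro ⟨θ, h1, h2, h3⟩
    have habs : (‖z‖ : ℂ) ≠ 0 := by
      simpa using hz
    have hexp : Complex.exp ((θ:ℝ) * Complex.I) =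
        Complex.exp ((2 * Real.pi * tval z : ℝ) * Complex.I) := by
      apply mul_left_cancel₀ habs
      rw [texp z, ← h3]
    obtain ⟨m, hm⟩ := Complex.exp_eq_exp_iff_exists_int.1 hexp
    have hθ : θ = 2 * Real.pi * tval z + m * (2 * Real.pi) := by
      have hI : (Complex.I : ℂ) ≠ 0 := Complex.I_ne_zero
      have h4 : ((θ : ℝ) : ℂ) = ((2 * Real.pi * tval z + m * (2 * Real.pi) : ℝ) : ℂ) := by
        apply mul_right_cancel₀ hI
        push_cast
        push_cast at hm
        linear_combination hm
      exact_mod_cast h4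
    rw [div_le_iff₀ hp] at h1
    rw [lt_div_iff₀ hp] at h2
    rw [hθ] at h1 h2
    set s := tval z
    have hA : (k:ℝ) ≤ (s + m) * 2 ^ g := by nlinarith
    have hB : (s + m) * 2 ^ g < (k:ℝ) + 1 := by nlinarith
    have hk1' : (1:ℝ) ≤ k := by exact_mod_cast hk1
    have hk2' : (k:ℝ) ≤ 2 ^ g := by
      have : ((k:ℝ)) ≤ ((2^g : ℕ) : ℝ) := by exact_mod_cast hk2
      simpa using this
    have hm0 : 0 ≤ m := by
      by_contra hc
      push_neg at hc
      have hcc : m ≤ -1 := by omega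
      have hm' : (m:ℝ) ≤ -1 := by exact_mod_cast hcc
      nlinarith
    have hm1 : m ≤ 1 := by
      by_contra hc
      push_neg at hc
      have hm' : (2:ℝ) ≤ m := by exact_mod_cast hc
      nlinarith
    have hm01 : m = 0 ∨ m = 1 := by omega
    rcases hm01 with rfl | rfl
    · simp only [Int.cast_zero, add_zero] at hA hB
      have hklt : k < 2 ^ g := by
        have : (k:ℝ) < (2:ℝ)^g := by nlinarith
        have h5 : ((k:ℕ):ℝ) < ((2^g : ℕ) : ℝ) := by push_cast; linarith
        exact_mod_cast h5
      rw [Nat.mod_eq_of_lt hklt, mem_dyI_iff hs0]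
      rw [Nat.floor_eq_iff (by positivity)]
      constructor
      · linarith
      · push_cast; linarith
    · simp only [Int.cast_one] at hA hB
      have hkeq : k = 2 ^ g := by
        have : (2:ℝ)^g < (k:ℝ) + 1 := by nlinarith
        have h5 : ((2^g : ℕ) : ℝ) < ((k:ℕ):ℝ) + 1 := by push_cast; linarith
        have h6 : 2^g < k + 1 := by exact_mod_cast h5
        omega
      subst hkeq
      rw [Nat.mod_self, mem_dyI_iff hs0, Nat.floor_eq_iff (by positivity)]
      constructor
      · push_cast
        positivity
      · push_cast
        have : (s + 1) * 2^g < ((2:ℝ)^g) + 1 := by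
          have h5 : ((2^g:ℕ):ℝ) = (2:ℝ)^g := by push_cast; ring
          rw [h5] at hB
          linarith
        nlinarith
  · intro hmem
    rcases lt_or_eq_of_le hk2 with hlt | heq
    · rw [Nat.mod_eq_of_lt hlt] at hmem
      obtain ⟨hl, hr⟩ := hmem
      refine ⟨2 * Real.pi * tval z, ?_, ?_, (texp z).symm⟩
      · rw [div_le_iff₀ hp]
        rw [div_le_iff₀ hp] at hl
        nlinarith
      · rw [lt_div_iff₀ hp]
        rw [lt_div_iff₀ hp] at hr
        nlinarith
    · subst heq
      rw [Nat.mod_self] at hmem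
      obtain ⟨hl, hr⟩ := hmem
      have hr' : tval z * 2 ^ g < 1 := by
        rw [lt_div_iff₀ hp] at hr
        simpa using hr
      refine ⟨2 * Real.pi * (tval z + 1), ?_, ?_, ?_⟩
      · rw [div_le_iff₀ hp]
        push_cast
        nlinarith [mul_nonneg (mul_nonneg hπ.le hs0) hp.le]
      · rw [lt_div_iff₀ hp]
        push_cast
        nlinarith [mul_lt_mul_of_pos_left hr' (by positivity : (0:ℝ) < 2 * Real.pi)]
      · have hc : ((2 * Real.pi * (tval z + 1) : ℝ) : ℂ) * Complex.I =
            ((2 * Real.pi * tval z : ℝ) : ℂ) * Complex.I + 2 * (Real.pi:ℂ) * Complex.I := by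
          push_cast
          ring
        rw [hc, Complex.exp_add, Complex.exp_two_pi_mul_I, mul_one, texp z]

lemma half_pow_le {a b : ℕ} (h : a ≤ b) : ((1:ℝ)/2) ^ b ≤ (1/2) ^ a :=
  pow_le_pow_of_le_one (by norm_num) (by norm_num) h

lemma ne_zero_of_window {g : ℕ} (hg : 1 ≤ g) {w : ℂ}
    (hw : 1 - ‖w‖ ≤ (1/2:ℝ)^g) : w ≠ 0 := by
  intro h0
  rw [h0] at hw
  simp only [norm_zero, sub_zero] at hw
  have := half_pow_le hg
  norm_num at this
  linarith

lemma memW_iff {g q : ℕ} (hg : 1 ≤ g) (hq1 : 1 ≤ q) (hq2 : q ≤ 2 ^ g) {w : ℂ} :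
    w ∈ Wwin g q ↔
      (‖w‖ < 1 ∧ 1 - ‖w‖ ≤ (1/2:ℝ)^g ∧ tval w ∈ dyI g (q % 2^g)) := by
  have hball : w ∈ unitDisc ↔ ‖w‖ < 1 := by
    rw [unitDisc, Metric.mem_ball, dist_zero_right]
  constructor
  · rintro ⟨h1, h2, h3⟩
    exact ⟨hball.1 h1, h2, (onArc_iff hg hq1 hq2 (ne_zero_of_window hg h2)).1 h3⟩
  · rintro ⟨h1, h2, h3⟩
    exact ⟨hball.2 h1, h2, (onArc_iff hg hq1 hq2 (ne_zero_of_window hg h2)).2 h3⟩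

lemma memR_iff {g q : ℕ} (hg : 1 ≤ g) (hq1 : 1 ≤ q) (hq2 : q ≤ 2 ^ g) {w : ℂ} :
    w ∈ Rwin g q ↔
      (‖w‖ < 1 ∧ (1/2:ℝ)^g / 2 < 1 - ‖w‖ ∧
        1 - ‖w‖ ≤ (1/2:ℝ)^g ∧ tval w ∈ dyI g (q % 2^g)) := by
  have hball : w ∈ unitDisc ↔ ‖w‖ < 1 := by
    rw [unitDisc, Metric.mem_ball, dist_zero_right]
  constructor
  · rintro ⟨h1, h2, h3, h4⟩
    exact ⟨hball.1 h1, h2, h3, (onArc_iff hg hq1 hq2 (ne_zero_of_window hg h3)).1 h4⟩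
  · rintro ⟨h1, h2, h3, h4⟩
    exact ⟨hball.2 h1, h2, h3, (onArc_iff hg hq1 hq2 (ne_zero_of_window hg h3)).2 h4⟩

lemma measurableSet_W {g q : ℕ} (hg : 1 ≤ g) (hq1 : 1 ≤ q) (hq2 : q ≤ 2 ^ g) :
    MeasurableSet (Wwin g q) := by
  have habs : Measurable fun w : ℂ => ‖w‖ := continuous_norm.measurable
  have : Wwin g q = {w : ℂ | ‖w‖ < 1} ∩
      ({w | 1 - ‖w‖ ≤ (1/2:ℝ)^g} ∩ tval ⁻¹' dyI g (q % 2^g)) := by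
    ext w
    simp only [Set.mem_inter_iff, Set.mem_setOf_eq, Set.mem_preimage]
    rw [memW_iff hg hq1 hq2]
  rw [this]
  exact (measurableSet_lt habs measurable_const).inter
    ((measurableSet_le (measurable_const.sub habs) measurable_const).inter
      (measurable_tval (measurableSet_dyI _ _)))

lemma measurableSet_R {g q : ℕ} (hg : 1 ≤ g) (hq1 : 1 ≤ q) (hq2 : q ≤ 2 ^ g) :
    MeasurableSet (Rwin g q) := by
  have habs : Measurable fun w : ℂ => ‖w‖ := continuous_norm.measurable
  have : Rwin g q = {w : ℂ | ‖w‖ < 1} ∩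
      ({w | (1/2:ℝ)^g / 2 < 1 - ‖w‖} ∩
        ({w | 1 - ‖w‖ ≤ (1/2:ℝ)^g} ∩ tval ⁻¹' dyI g (q % 2^g))) := by
    ext w
    simp only [Set.mem_inter_iff, Set.mem_setOf_eq, Set.mem_preimage]
    rw [memR_iff hg hq1 hq2]
  rw [this]
  exact (measurableSet_lt habs measurable_const).inter
    ((measurableSet_lt measurable_const (measurable_const.sub habs)).inter
      ((measurableSet_le (measurable_const.sub habs) measurable_const).inter
        (measurable_tval (measurableSet_dyI _ _))))

lemma mod_inj {g q q' : ℕ} (hq1 : 1 ≤ q) (hq2 : q ≤ 2^g) (hq1' : 1 ≤ q') (hq2' : q' ≤ 2^g)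
    (h : q % 2^g = q' % 2^g) : q = q' := by
  rcases Nat.lt_or_ge q (2^g) with h1 | h1 <;> rcases Nat.lt_or_ge q' (2^g) with h2 | h2
  · rwa [Nat.mod_eq_of_lt h1, Nat.mod_eq_of_lt h2] at h
  · have : q' = 2^g := le_antisymm hq2' h2
    subst this
    rw [Nat.mod_eq_of_lt h1, Nat.mod_self] at h
    omega
  · have : q = 2^g := le_antisymm hq2 h1
    subst this
    rw [Nat.mod_self, Nat.mod_eq_of_lt h2] at h
    omega
  · omega

lemma R_disjoint {g q g' q' : ℕ} (hg : 1 ≤ g) (hq1 : 1 ≤ q) (hq2 : q ≤ 2^g)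
    (hg' : 1 ≤ g') (hq1' : 1 ≤ q') (hq2' : q' ≤ 2^g') (hne : (g, q) ≠ (g', q')) :
    Disjoint (Rwin g q) (Rwin g' q') := by
  rw [Set.disjoint_left]
  intro w hw hw'
  rw [memR_iff hg hq1 hq2] at hw
  rw [memR_iff hg' hq1' hq2'] at hw'
  rcases Nat.lt_trichotomy g g' with h | h | h
  · have h5 : ((1:ℝ)/2)^g' ≤ (1/2)^(g+1) := half_pow_le h
    rw [pow_succ] at h5
    linarith [hw.2.1, hw'.2.2.1]
  · subst h
    have hqq : q = q' := mod_inj hq1 hq2 hq1' hq2'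
      (dyI_same ⟨tval w, hw.2.2.2, hw'.2.2.2⟩)
    exact hne (by rw [hqq])
  · have h5 : ((1:ℝ)/2)^g ≤ (1/2)^(g'+1) := half_pow_le h
    rw [pow_succ] at h5
    linarith [hw'.2.1, hw.2.2.1]

lemma R_sub_W {g q h b : ℕ} (hg : 1 ≤ g) (hq1 : 1 ≤ q) (hq2 : q ≤ 2^g)
    (hh : 1 ≤ h) (hb1 : 1 ≤ b) (hb2 : b ≤ 2^h) (hle : h ≤ g)
    (hsub : dyI g (q % 2^g) ⊆ dyI h (b % 2^h)) : Rwin g q ⊆ Wwin h b := by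
  intro w hw
  rw [memR_iff hg hq1 hq2] at hw
  rw [memW_iff hh hb1 hb2]
  exact ⟨hw.1, le_trans hw.2.2.1 (half_pow_le hle), hsub hw.2.2.2⟩

/-- **Lemma 3.1 (1).** Let `μ` be a positive Borel measure on `𝔻` with `S_μ` compact on `H²`
(equivalently, `lim_n sup_k μ(W(I_{n,k}))/|I_{n,k}| = 0`), let `(I_j)` enumerate the dyadic
arcs so that `μ(W(I_j))/|I_j|` is nonincreasing, let `z_k ∈ R(I_k)`, fix `n ≥ 1` and set
`μ_n = Σ_{k ≥ n} μ(R(I_k)) δ_{z_k}`. Then `sup_j μ_n(W(I_j))/|I_j| ≤ τ_n(μ) = μ(W(I_n))/|I_n|`. -/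
theorem discretized_measure_window_bound
    (μ : Measure ℂ) (hμ : μ unitDiscᶜ = 0)
    (hcomp : ∀ ε : ENNReal, 0 < ε → ∃ N : ℕ, ∀ n : ℕ, N ≤ n → ∀ k : ℕ, 1 ≤ k → k ≤ 2 ^ n →
      μ (Wwin n k) / ENNReal.ofReal (arcLen n) < ε)
    (e : ℕ → ℕ × ℕ) (he : Set.BijOn e (Set.Ici 1) dyadicSet)
    (hmono : AntitoneOn (fun j : ℕ => μ (Wwin (e j).1 (e j).2) / ENNReal.ofReal (arcLen (e j).1))
      (Set.Ici 1))
    (z : ℕ → ℂ) (hz : ∀ k : ℕ, 1 ≤ k → z k ∈ Rwin (e k).1 (e k).2)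
    (n : ℕ) (hn : 1 ≤ n) :
    ∀ j : ℕ, 1 ≤ j →
      (∑' k : {m : ℕ // n ≤ m}, μ (Rwin (e (k : ℕ)).1 (e (k : ℕ)).2) *
          (Wwin (e j).1 (e j).2).indicator (fun _ => (1 : ENNReal)) (z (k : ℕ))) /
        ENNReal.ofReal (arcLen (e j).1) ≤
      μ (Wwin (e n).1 (e n).2) / ENNReal.ofReal (arcLen (e n).1) := by
  classical
  intro j hj
  have hval : ∀ k : ℕ, 1 ≤ k → 1 ≤ (e k).1 ∧ 1 ≤ (e k).2 ∧ (e k).2 ≤ 2 ^ (e k).1 :=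
    fun k hk => he.mapsTo (Set.mem_Ici.2 hk)
  have hvj := hval j hj
  have hLne : ∀ a : ℕ, ENNReal.ofReal (arcLen a) ≠ 0 := by
    intro a
    rw [arcLen]
    exact (ENNReal.ofReal_pos.2 (by positivity)).ne'
  have hLnetop : ∀ a : ℕ, ENNReal.ofReal (arcLen a) ≠ ⊤ := fun a => ENNReal.ofReal_ne_top
  set τ : ENNReal := μ (Wwin (e n).1 (e n).2) / ENNReal.ofReal (arcLen (e n).1) with hτ
  set T : Set ℕ := {k | n ≤ k ∧ z k ∈ Wwin (e j).1 (e j).2} with hT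
  set J : ℕ → Set ℝ := fun k => dyI (e k).1 ((e k).2 % 2 ^ (e k).1) with hJ
  -- basic facts for elements of T
  have hmemT : ∀ k ∈ T, (e j).1 ≤ (e k).1 ∧ J k ⊆ J j := by
    intro k hk
    obtain ⟨hkn, hkW⟩ := hk
    have hk1 : 1 ≤ k := le_trans hn hkn
    have hvk := hval k hk1
    have hzR := hz k hk1
    rw [memR_iff hvk.1 hvk.2.1 hvk.2.2] at hzR
    rw [memW_iff hvj.1 hvj.2.1 hvj.2.2] at hkW
    have hgen : (e j).1 ≤ (e k).1 := by
      by_contra hc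
      push_neg at hc
      have h5 : ((1:ℝ)/2)^(e j).1 ≤ (1/2)^((e k).1 + 1) := half_pow_le hc
      rw [pow_succ] at h5
      linarith [hzR.2.1, hkW.2.1]
    exact ⟨hgen, dyI_subset hgen ⟨tval (z k), hzR.2.2.2, hkW.2.2⟩⟩
  -- maximal arcs
  have hmax : ∀ k ∈ T, ∃ m, m ∈ T ∧ J k ⊆ J m ∧ ∀ m', m' ∈ T → J m ⊆ J m' → m' = m := by
    intro k hk
    set Gp : Set ℕ := {d | ∃ m, m ∈ T ∧ (e m).1 = d ∧ J k ⊆ J m} with hGp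
    have hGpne : Gp.Nonempty := ⟨(e k).1, k, hk, rfl, subset_rfl⟩
    obtain ⟨m, hmT, hmd, hmsub⟩ := Nat.sInf_mem hGpne
    refine ⟨m, hmT, hmsub, ?_⟩
    intro m' hm'T hm'sub
    have hsub' : J k ⊆ J m' := hmsub.trans hm'sub
    have hgle : (e m').1 ≤ (e m).1 := dyI_subset_gen hm'sub
    have hgge : (e m).1 ≤ (e m').1 := hmd ▸ Nat.sInf_le ⟨m', hm'T, rfl, hsub'⟩
    have hgeq : (e m').1 = (e m).1 := le_antisymm hgle hgge
    have hm1 : 1 ≤ m := le_trans hn hmT.1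
    have hm'1 : 1 ≤ m' := le_trans hn hm'T.1
    have hvm := hval m hm1
    have hvm' := hval m' hm'1
    -- same dyadic interval
    have hJm : J m = dyI (e m).1 ((e m).2 % 2 ^ (e m).1) := rfl
    have hJm' : J m' = dyI (e m).1 ((e m').2 % 2 ^ (e m).1) := by
      show dyI (e m').1 ((e m').2 % 2 ^ (e m').1) = _
      rw [hgeq]
    have ht0 : (((e m).2 % 2 ^ (e m).1 : ℕ) : ℝ) / 2 ^ (e m).1 ∈ J m := dyI_self_mem _ _
    have ht0' := hm'sub ht0
    rw [hJm'] at ht0'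
    have hmods : (e m).2 % 2 ^ (e m).1 = (e m').2 % 2 ^ (e m).1 :=
      dyI_same ⟨_, ht0, ht0'⟩
    have hq : (e m).2 = (e m').2 := by
      refine mod_inj hvm.2.1 hvm.2.2 hvm'.2.1 ?_ hmods
      rw [← hgeq]
      exact hvm'.2.2
    have heq : e m' = e m := by
      ext
      · exact hgeq
      · exact hq.symm
    exact he.injOn (Set.mem_Ici.2 hm'1) (Set.mem_Ici.2 hm1) heq
  have hmax' : ∀ k : ℕ, ∃ m,
      k ∈ T → (m ∈ T ∧ J k ⊆ J m ∧ ∀ m', m' ∈ T → J m ⊆ J m' → m' = m) := by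
    intro k
    by_cases hk : k ∈ T
    · exact (hmax k hk).imp fun m hm => fun _ => hm
    · exact ⟨0, fun h => absurd h hk⟩
  choose M hM using hmax'
  set Ran : Set ℕ := M '' T with hRan
  have hRanT : ∀ m ∈ Ran, m ∈ T := by
    rintro m ⟨k, hk, rfl⟩
    exact (hM k hk).1
  -- the summands as measures of sets
  set sfun : {m : ℕ // n ≤ m} → Set ℂ := fun k =>
    if z (k:ℕ) ∈ Wwin (e j).1 (e j).2 then Rwin (e (k:ℕ)).1 (e (k:ℕ)).2 else ∅ with hsfun
  have hterm : ∀ k : {m : ℕ // n ≤ m},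
      μ (Rwin (e (k:ℕ)).1 (e (k:ℕ)).2) *
        (Wwin (e j).1 (e j).2).indicator (fun _ => (1 : ENNReal)) (z (k:ℕ)) = μ (sfun k) := by
    intro k
    by_cases hzk : z (k:ℕ) ∈ Wwin (e j).1 (e j).2
    · rw [Set.indicator_of_mem hzk, mul_one, hsfun]
      simp only [if_pos hzk]
    · rw [Set.indicator_of_notMem hzk, mul_zero, hsfun]
      simp only [if_neg hzk, measure_empty]
  have hdisj : Pairwise (Function.onFun Disjoint sfun) := by
    intro a b hab
    have hab' : (a:ℕ) ≠ (b:ℕ) := fun h => hab (Subtype.ext h)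
    have ha1 : 1 ≤ (a:ℕ) := le_trans hn a.2
    have hb1 : 1 ≤ (b:ℕ) := le_trans hn b.2
    have hva := hval a ha1
    have hvb := hval b hb1
    have hene : ((e (a:ℕ)).1, (e (a:ℕ)).2) ≠ ((e (b:ℕ)).1, (e (b:ℕ)).2) := by
      intro h
      apply hab'
      apply he.injOn (Set.mem_Ici.2 ha1) (Set.mem_Ici.2 hb1)
      ext
      · exact congrArg Prod.fst h
      · exact congrArg Prod.snd h
    simp only [Function.onFun, hsfun]
    split_ifs with h1 h2 h2
    · exact R_disjoint hva.1 hva.2.1 hva.2.2 hvb.1 hvb.2.1 hvb.2.2 hene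
    · exact Set.disjoint_empty _
    · exact Set.empty_disjoint _
    · exact Set.empty_disjoint _
  have hmeas : ∀ k : {m : ℕ // n ≤ m}, MeasurableSet (sfun k) := by
    intro k
    have hk1 : 1 ≤ (k:ℕ) := le_trans hn k.2
    have hvk := hval k hk1
    simp only [hsfun]
    split_ifs
    · exact measurableSet_R hvk.1 hvk.2.1 hvk.2.2
    · exact MeasurableSet.empty
  have hU : μ (⋃ k, sfun k) = ∑' k, μ (sfun k) := measure_iUnion hdisj hmeas
  -- covering by maximal windows
  have hcover : (⋃ k, sfun k) ⊆ ⋃ m : Ran, Wwin (e (m:ℕ)).1 (e (m:ℕ)).2 := by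
    intro x hx
    simp only [Set.mem_iUnion] at hx ⊢
    obtain ⟨k, hxk⟩ := hx
    by_cases hzk : z (k:ℕ) ∈ Wwin (e j).1 (e j).2
    · have hkT : (k:ℕ) ∈ T := ⟨k.2, hzk⟩
      obtain ⟨hMT, hMsub, _⟩ := hM k hkT
      have hk1 : 1 ≤ (k:ℕ) := le_trans hn k.2
      have hvk := hval k hk1
      have hM1 : 1 ≤ M (k:ℕ) := le_trans hn hMT.1
      have hvM := hval _ hM1
      have hgle : (e (M (k:ℕ))).1 ≤ (e (k:ℕ)).1 := dyI_subset_gen hMsub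
      have hxR : x ∈ Rwin (e (k:ℕ)).1 (e (k:ℕ)).2 := by
        rw [hsfun] at hxk
        simpa only [if_pos hzk] using hxk
      exact ⟨⟨M (k:ℕ), ⟨(k:ℕ), hkT, rfl⟩⟩,
        R_sub_W hvk.1 hvk.2.1 hvk.2.2 hvM.1 hvM.2.1 hvM.2.2 hgle hMsub hxR⟩
    · rw [hsfun] at hxk
      simp only [if_neg hzk] at hxk
      exact absurd hxk (Set.notMem_empty x)
  -- each maximal window has small measure
  have hWm : ∀ m : Ran, μ (Wwin (e (m:ℕ)).1 (e (m:ℕ)).2) ≤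
      τ * ENNReal.ofReal (arcLen (e (m:ℕ)).1) := by
    rintro ⟨m, hm⟩
    have hmT := hRanT m hm
    have hmn : n ≤ m := hmT.1
    have h := hmono (Set.mem_Ici.2 hn) (Set.mem_Ici.2 (le_trans hn hmn)) hmn
    calc μ (Wwin (e m).1 (e m).2)
        = μ (Wwin (e m).1 (e m).2) / ENNReal.ofReal (arcLen (e m).1) *
          ENNReal.ofReal (arcLen (e m).1) :=
        (ENNReal.div_mul_cancel (hLne _) (hLnetop _)).symm
      _ ≤ τ * ENNReal.ofReal (arcLen (e m).1) := mul_le_mul_left h _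
  -- disjointness of maximal dyadic intervals
  have hJdisj : Pairwise (Function.onFun Disjoint fun m : Ran => J (m:ℕ)) := by
    rintro ⟨m, hm⟩ ⟨m', hm'⟩ hne'
    have hmm' : m ≠ m' := fun h => hne' (Subtype.ext h)
    simp only [Function.onFun]
    by_contra hc
    rw [Set.not_disjoint_iff_nonempty_inter] at hc
    rcases le_total (e m).1 (e m').1 with hle | hle
    · have hsub : J m' ⊆ J m := dyI_subset hle (Set.inter_comm _ _ ▸ hc)
      obtain ⟨k', hk', hMk'⟩ := hm'
      have h9 : m = M k' := (hM k' hk').2.2 m (hRanT m hm) (by rw [hMk']; exact hsub)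
      rw [hMk'] at h9
      exact hmm' h9
    · have hsub : J m ⊆ J m' := dyI_subset hle hc
      obtain ⟨k, hk, hMk⟩ := hm
      have h9 : m' = M k := (hM k hk).2.2 m' (hRanT m' hm') (by rw [hMk]; exact hsub)
      rw [hMk] at h9
      exact hmm' h9.symm
  -- total length of maximal intervals
  have hvolsum : ∑' m : Ran, volume (J (m:ℕ)) ≤ volume (J j) := by
    rw [← measure_iUnion hJdisj (fun m => measurableSet_dyI _ _)]
    exact measure_mono (Set.iUnion_subset fun m => (hmemT _ (hRanT _ m.2)).2)
  have hL_eq : ∀ a b : ℕ, ENNReal.ofReal (arcLen a) =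
      ENNReal.ofReal (2 * Real.pi) * volume (dyI a b) := by
    intro a b
    rw [vol_dyI, ← ENNReal.ofReal_mul (by positivity)]
    congr 1
    rw [arcLen]
    ring
  have hLsum : ∑' m : Ran, ENNReal.ofReal (arcLen (e (m:ℕ)).1) ≤
      ENNReal.ofReal (arcLen (e j).1) := by
    calc ∑' m : Ran, ENNReal.ofReal (arcLen (e (m:ℕ)).1)
        = ∑' m : Ran, ENNReal.ofReal (2 * Real.pi) * volume (J (m:ℕ)) := by
          apply tsum_congr
          intro m
          rw [hJ, hL_eq]
      _ = ENNReal.ofReal (2 * Real.pi) * ∑' m : Ran, volume (J (m:ℕ)) :=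
          ENNReal.tsum_mul_left
      _ ≤ ENNReal.ofReal (2 * Real.pi) * volume (J j) := mul_le_mul_right hvolsum _
      _ = ENNReal.ofReal (arcLen (e j).1) := by rw [hJ, ← hL_eq]
  -- main chain
  have hmain : (∑' k : {m : ℕ // n ≤ m}, μ (Rwin (e (k:ℕ)).1 (e (k:ℕ)).2) *
      (Wwin (e j).1 (e j).2).indicator (fun _ => (1 : ENNReal)) (z (k:ℕ))) ≤
      τ * ENNReal.ofReal (arcLen (e j).1) := by
    calc (∑' k : {m : ℕ // n ≤ m}, μ (Rwin (e (k:ℕ)).1 (e (k:ℕ)).2) *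
        (Wwin (e j).1 (e j).2).indicator (fun _ => (1 : ENNReal)) (z (k:ℕ)))
        = ∑' k, μ (sfun k) := tsum_congr hterm
      _ = μ (⋃ k, sfun k) := hU.symm
      _ ≤ μ (⋃ m : Ran, Wwin (e (m:ℕ)).1 (e (m:ℕ)).2) := measure_mono hcover
      _ ≤ ∑' m : Ran, μ (Wwin (e (m:ℕ)).1 (e (m:ℕ)).2) := measure_iUnion_le _
      _ ≤ ∑' m : Ran, τ * ENNReal.ofReal (arcLen (e (m:ℕ)).1) := ENNReal.tsum_le_tsum hWm
      _ = τ * ∑' m : Ran, ENNReal.ofReal (arcLen (e (m:ℕ)).1) := ENNReal.tsum_mul_left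
      _ ≤ τ * ENNReal.ofReal (arcLen (e j).1) := mul_le_mul_right hLsum _
  rw [ENNReal.div_le_iff_le_mul (Or.inl (hLne _)) (Or.inl (hLnetop _))]
  exact hmain
end
end

section
/- Let h : [0,∞) → [0,∞) be an increasing function with h(0) = 0, and suppose there exist ε ∈ (0,1) and p ≥ 1 such that t ↦ h(t^ε) is concave and t ↦ h(t^p) is convex. Let μ be a positive Borel measure on 𝔻. Then there exists B > 0, depending only on ε and p, such that Σ_{n,k} h(μ(W(I_{n,k}))/|I_{n,k}|) ≤ Σ_{n,k} h(B·μ(R(I_{n,k}))/|I_{n,k}|), where the sums run over all dyadic arcs. -/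
open MeasureTheory Complex Set Filter

noncomputable section

open Topology ENNReal



lemma concave_scale {φ : ℝ → ℝ} (hφ : ConcaveOn ℝ (Set.Ici 0) φ) (hφ0 : φ 0 = 0)
    {θ t : ℝ} (hθ0 : 0 ≤ θ) (hθ1 : θ ≤ 1) (ht : 0 ≤ t) :
    θ * φ t ≤ φ (θ * t) := by
  have := hφ.2 (Set.mem_Ici.2 ht) (Set.mem_Ici.2 (le_refl (0:ℝ))) hθ0
    (by linarith : (0:ℝ) ≤ 1 - θ) (by ring)
  simpa [hφ0, smul_eq_mul] using this

lemma concave_subadd {φ : ℝ → ℝ} (hφ : ConcaveOn ℝ (Set.Ici 0) φ) (hφ0 : φ 0 = 0)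
    {a b : ℝ} (ha : 0 ≤ a) (hb : 0 ≤ b) : φ (a + b) ≤ φ a + φ b := by
  rcases eq_or_lt_of_le (add_nonneg ha hb) with hs | hs
  · have ha0 : a = 0 := by linarith
    have hb0 : b = 0 := by linarith
    simp [ha0, hb0, hφ0]
  · have h1 : a / (a + b) * φ (a + b) ≤ φ a := by
      have := concave_scale hφ hφ0 (div_nonneg ha hs.le)
        (by rw [div_le_one hs]; linarith) hs.le
      rwa [div_mul_cancel₀ _ hs.ne'] at this
    have h2 : b / (a + b) * φ (a + b) ≤ φ b := by
      have := concave_scale hφ hφ0 (div_nonneg hb hs.le)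
        (by rw [div_le_one hs]; linarith) hs.le
      rwa [div_mul_cancel₀ _ hs.ne'] at this
    have h3 : (a / (a+b) + b / (a+b)) * φ (a+b) ≤ φ a + φ b := by
      rw [add_mul]; exact add_le_add h1 h2
    rwa [← add_div, div_self hs.ne', one_mul] at h3

lemma concave_sum_le {φ : ℝ → ℝ} (hφ : ConcaveOn ℝ (Set.Ici 0) φ) (hφ0 : φ 0 = 0)
    {ι : Type} (F : Finset ι) (a : ι → ℝ) (ha : ∀ i ∈ F, 0 ≤ a i) :
    φ (∑ i ∈ F, a i) ≤ ∑ i ∈ F, φ (a i) := by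
  classical
  induction F using Finset.cons_induction with
  | empty => simp [hφ0]
  | cons i F hi ih =>
    rw [Finset.sum_cons, Finset.sum_cons]
    have hnn : 0 ≤ ∑ j ∈ F, a j :=
      Finset.sum_nonneg fun j hj => ha j (Finset.mem_cons_of_mem hj)
    calc φ (a i + ∑ j ∈ F, a j) ≤ φ (a i) + φ (∑ j ∈ F, a j) :=
          concave_subadd hφ hφ0 (ha i (Finset.mem_cons_self _ _)) hnn
      _ ≤ φ (a i) + ∑ j ∈ F, φ (a j) :=
          add_le_add le_rfl (ih fun j hj => ha j (Finset.mem_cons_of_mem hj))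

section Main

variable {ε p : ℝ} {h : ℝ → ℝ}

lemma rpow_inv_self (hε0 : 0 < ε) {t : ℝ} (ht : 0 ≤ t) : (t ^ (1/ε)) ^ ε = t := by
  rw [← Real.rpow_mul ht, one_div_mul_cancel hε0.ne', Real.rpow_one]

lemma CL1fin (hε0 : 0 < ε) (hε1 : ε < 1)
    (hmono : MonotoneOn h (Set.Ici 0)) (h0 : h 0 = 0) (hnn : ∀ t ∈ Set.Ici (0:ℝ), 0 ≤ h t)
    (hconc : ConcaveOn ℝ (Set.Ici 0) (fun t => h (t ^ ε)))
    {ι : Type} (F : Finset ι) (x lam : ι → ℝ) (hx : ∀ i, 0 ≤ x i)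
    (hlam0 : ∀ i, 0 ≤ lam i) (hlamx : ∀ i, x i ≠ 0 → 0 < lam i)
    (hlam1 : ∑ i ∈ F, lam i ≤ 1) :
    h (∑ i ∈ F, x i) ≤ ∑ i ∈ F, h (lam i ^ (ε - 1) * x i) := by
  classical
  set φ : ℝ → ℝ := fun t => h (t ^ ε) with hφdef
  have hφ0 : φ 0 = 0 := by
    simp only [φ, Real.zero_rpow hε0.ne', h0]
  have hterm_nonneg : ∀ i, 0 ≤ lam i ^ (ε - 1) * x i := fun i =>
    mul_nonneg (Real.rpow_nonneg (hlam0 i) _) (hx i)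
  set F' := F.filter (fun i => x i ≠ 0) with hF'
  have hsum_eq : ∑ i ∈ F', x i = ∑ i ∈ F, x i := Finset.sum_filter_ne_zero F
  have hrhs : ∑ i ∈ F', h (lam i ^ (ε-1) * x i) ≤ ∑ i ∈ F, h (lam i ^ (ε-1) * x i) :=
    Finset.sum_le_sum_of_subset_of_nonneg (Finset.filter_subset _ _)
      (fun i _ _ => hnn _ (hterm_nonneg i))
  rw [← hsum_eq]
  refine le_trans ?_ hrhs
  rcases F'.eq_empty_or_nonempty with hFe | hFne
  · simp [hFe, h0]
  have hxposF : ∀ i ∈ F', 0 < lam i := fun i hi => hlamx i (Finset.mem_filter.1 hi).2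
  set L := ∑ i ∈ F', lam i with hL
  have hLpos : 0 < L := Finset.sum_pos hxposF hFne
  have hL1 : L ≤ 1 := le_trans (Finset.sum_le_sum_of_subset_of_nonneg
      (Finset.filter_subset _ _) fun i _ _ => hlam0 i) hlam1
  set w : ι → ℝ := fun i => lam i / L with hw_def
  set z : ι → ℝ := fun i => x i * L / lam i with hz_def
  have hw : ∀ i ∈ F', 0 ≤ w i := fun i _ => div_nonneg (hlam0 i) hLpos.le
  have hw' : ∑ i ∈ F', w i = 1 := by
    simp only [w]; rw [← Finset.sum_div]; exact div_self hLpos.ne'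
  have hz : ∀ i ∈ F', 0 ≤ z i := fun i hi =>
    div_nonneg (mul_nonneg (hx i) hLpos.le) (hxposF i hi).le
  have hwz : ∀ i ∈ F', w i * z i = x i := by
    intro i hi
    have := (hxposF i hi).ne'
    show lam i / L * (x i * L / lam i) = x i
    rw [div_mul_div_comm, div_eq_iff (mul_ne_zero hLpos.ne' this)]
    ring
  have hp1 : (1:ℝ) ≤ 1/ε := by rw [le_div_iff₀ hε0]; linarith
  have hjensen := Real.rpow_arith_mean_le_arith_mean_rpow F' w z hw hw' hz hp1
  have hS'nn : 0 ≤ ∑ i ∈ F', x i := Finset.sum_nonneg (fun i _ => hx i)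
  have hφmono : ∀ {t1 t2 : ℝ}, 0 ≤ t1 → t1 ≤ t2 → φ t1 ≤ φ t2 := by
    intro t1 t2 ht1 h12
    exact hmono (Set.mem_Ici.2 (Real.rpow_nonneg ht1 ε))
      (Set.mem_Ici.2 (Real.rpow_nonneg (ht1.trans h12) ε))
      (Real.rpow_le_rpow ht1 h12 hε0.le)
  have hTnn : ∀ i ∈ F', 0 ≤ w i * z i ^ (1/ε) := fun i hi =>
    mul_nonneg (hw i hi) (Real.rpow_nonneg (hz i hi) _)
  calc h (∑ i ∈ F', x i) = φ ((∑ i ∈ F', x i) ^ (1/ε)) := by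
        rw [hφdef]; simp only; rw [rpow_inv_self hε0 hS'nn]
    _ ≤ φ (∑ i ∈ F', w i * z i ^ (1/ε)) := by
        apply hφmono (Real.rpow_nonneg hS'nn _)
        calc (∑ i ∈ F', x i) ^ (1/ε) = (∑ i ∈ F', w i * z i) ^ (1/ε) := by
              rw [Finset.sum_congr rfl hwz]
          _ ≤ ∑ i ∈ F', w i * z i ^ (1/ε) := hjensen
    _ ≤ ∑ i ∈ F', φ (w i * z i ^ (1/ε)) := concave_sum_le hconc hφ0 F' _ hTnn
    _ ≤ ∑ i ∈ F', h (lam i ^ (ε-1) * x i) := by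
        apply Finset.sum_le_sum
        intro i hi
        have hlp := hxposF i hi
        have hzi := hz i hi
        have h1 : φ (w i * z i ^ (1/ε)) = h (w i ^ ε * z i) := by
          simp only [φ]
          rw [Real.mul_rpow (hw i hi) (Real.rpow_nonneg hzi _), rpow_inv_self hε0 hzi]
        have h2 : w i ^ ε * z i = lam i ^ (ε-1) * x i * L ^ (1-ε) := by
          have e1 : lam i ^ (ε-1) = lam i ^ ε / lam i := by
            rw [Real.rpow_sub hlp, Real.rpow_one]
          have e2 : L ^ (1-ε) = L / L ^ ε := by
            rw [Real.rpow_sub hLpos, Real.rpow_one]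
          have e3 : w i ^ ε = lam i ^ ε / L ^ ε := by
            simp only [w]; rw [Real.div_rpow (hlam0 i) hLpos.le]
          rw [e3, e1, e2]
          have hLe : (L:ℝ) ^ ε ≠ 0 := (Real.rpow_pos_of_pos hLpos ε).ne'
          simp only [z]
          field_simp
        rw [h1, h2]
        have hle1 : L ^ (1-ε) ≤ 1 := Real.rpow_le_one hLpos.le hL1 (by linarith)
        exact hmono (Set.mem_Ici.2 (mul_nonneg (hterm_nonneg i)
            (Real.rpow_nonneg hLpos.le _)))
          (Set.mem_Ici.2 (hterm_nonneg i))
          (mul_le_of_le_one_right (hterm_nonneg i) hle1)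

end Main

section Main
variable {ε p : ℝ} {h : ℝ → ℝ}


lemma CL1 (hε0 : 0 < ε) (hε1 : ε < 1)
    (hmono : MonotoneOn h (Set.Ici 0)) (h0 : h 0 = 0) (hnn : ∀ t ∈ Set.Ici (0:ℝ), 0 ≤ h t)
    (hconc : ConcaveOn ℝ (Set.Ici 0) (fun t => h (t ^ ε)))
    {ι : Type} (x lam : ι → ℝ) (hx : ∀ i, 0 ≤ x i) (hxs : Summable x)
    (hlam0 : ∀ i, 0 ≤ lam i) (hlams : Summable lam) (hlam1 : ∑' i, lam i ≤ 1)
    (hlamx : ∀ i, x i ≠ 0 → 0 < lam i) :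
    ENNReal.ofReal (h (∑' i, x i)) ≤ ∑' i, ENNReal.ofReal (h (lam i ^ (ε - 1) * x i)) := by
  classical
  set φ : ℝ → ℝ := fun t => h (t ^ ε) with hφdef
  have hφ0 : φ 0 = 0 := by simp only [φ, Real.zero_rpow hε0.ne', h0]
  set S := ∑' i, x i with hSdef
  have hS0 : 0 ≤ S := tsum_nonneg hx
  rcases eq_or_lt_of_le hS0 with hS | hSpos
  · rw [← hS, h0]
    simp
  · have key : ∀ F : Finset ι,
        ENNReal.ofReal (((∑ i ∈ F, x i) / S) ^ (1/ε) * h S)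
          ≤ ∑' i, ENNReal.ofReal (h (lam i ^ (ε - 1) * x i)) := by
      intro F
      have hSF0 : 0 ≤ ∑ i ∈ F, x i := Finset.sum_nonneg fun i _ => hx i
      have hSFS : ∑ i ∈ F, x i ≤ S := Summable.sum_le_tsum F (fun i _ => hx i) hxs
      have hdiv0 : 0 ≤ (∑ i ∈ F, x i) / S := div_nonneg hSF0 hS0
      have hdiv1 : (∑ i ∈ F, x i) / S ≤ 1 := (div_le_one hSpos).2 hSFS
      set θ := ((∑ i ∈ F, x i) / S) ^ (1/ε) with hθdef
      have hθ0 : 0 ≤ θ := Real.rpow_nonneg hdiv0 _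
      have hθ1 : θ ≤ 1 := Real.rpow_le_one hdiv0 hdiv1 (by positivity)
      have ht0 : (0:ℝ) ≤ S ^ (1/ε) := Real.rpow_nonneg hS0 _
      have hsc := concave_scale hconc hφ0 hθ0 hθ1 ht0
      have e1 : (S ^ (1/ε)) ^ ε = S := rpow_inv_self hε0 hS0
      have e2 : (θ * S ^ (1/ε)) ^ ε = ∑ i ∈ F, x i := by
        rw [Real.mul_rpow hθ0 ht0, e1, hθdef, rpow_inv_self hε0 hdiv0,
          div_mul_cancel₀ _ hSpos.ne']
      simp only [φ] at hsc
      rw [e1, e2] at hsc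
      -- hsc : θ * h S ≤ h (∑ i ∈ F, x i)
      have hfin := CL1fin hε0 hε1 hmono h0 hnn hconc F x lam hx hlam0 hlamx
        (le_trans (Summable.sum_le_tsum F (fun i _ => hlam0 i) hlams) hlam1)
      calc ENNReal.ofReal (θ * h S) ≤ ENNReal.ofReal (h (∑ i ∈ F, x i)) :=
            ENNReal.ofReal_le_ofReal hsc
        _ ≤ ENNReal.ofReal (∑ i ∈ F, h (lam i ^ (ε - 1) * x i)) :=
            ENNReal.ofReal_le_ofReal hfin
        _ = ∑ i ∈ F, ENNReal.ofReal (h (lam i ^ (ε - 1) * x i)) :=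
            ENNReal.ofReal_sum_of_nonneg fun i _ =>
              hnn _ (Set.mem_Ici.2 (mul_nonneg (Real.rpow_nonneg (hlam0 i) _) (hx i)))
        _ ≤ ∑' i, ENNReal.ofReal (h (lam i ^ (ε - 1) * x i)) := ENNReal.sum_le_tsum F
    have hto : Tendsto (fun F : Finset ι => ∑ i ∈ F, x i) atTop (𝓝 S) := hxs.hasSum
    have hcont : ContinuousAt (fun t : ℝ => ENNReal.ofReal ((t/S) ^ (1/ε) * h S)) S := by
      apply ENNReal.continuous_ofReal.continuousAt.comp
      apply ContinuousAt.mul ?_ continuousAt_const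
      have h1 : ContinuousAt (fun t : ℝ => t / S) S :=
        continuousAt_id.div continuousAt_const hSpos.ne'
      exact h1.rpow_const (Or.inl (by rw [div_self hSpos.ne']; exact one_ne_zero))
    have hlim : Tendsto
        (fun F : Finset ι => ENNReal.ofReal (((∑ i ∈ F, x i) / S) ^ (1/ε) * h S))
        atTop (𝓝 (ENNReal.ofReal (h S))) := by
      have := hcont.tendsto.comp hto
      simpa [Function.comp_def, div_self hSpos.ne', Real.one_rpow] using this
    exact le_of_tendsto hlim (Eventually.of_forall key)

lemma convex_shrink (hp : 1 ≤ p) (hmono : MonotoneOn h (Set.Ici 0)) (h0 : h 0 = 0)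
    (hconv : ConvexOn ℝ (Set.Ici 0) (fun t => h (t ^ p)))
    {θ v : ℝ} (hθ0 : 0 ≤ θ) (hθ1 : θ ≤ 1) (hv : 0 ≤ v) :
    h (θ * v) ≤ θ ^ (1/p) * h v := by
  have hp0 : 0 < p := lt_of_lt_of_le one_pos hp
  have hrwp : ∀ {t : ℝ}, 0 ≤ t → (t ^ (1/p)) ^ p = t := fun ht => by
    rw [← Real.rpow_mul ht, one_div_mul_cancel hp0.ne', Real.rpow_one]
  set lam := θ ^ (1/p) with hlamdef
  have hlam0 : 0 ≤ lam := Real.rpow_nonneg hθ0 _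
  have hlam1 : lam ≤ 1 := Real.rpow_le_one hθ0 hθ1 (by positivity)
  have hsc := hconv.2 (Set.mem_Ici.2 (Real.rpow_nonneg hv (1/p)))
    (Set.mem_Ici.2 (le_refl (0:ℝ))) hlam0 (by linarith : (0:ℝ) ≤ 1 - lam) (by ring)
  simp only [smul_eq_mul, mul_zero, add_zero, Real.zero_rpow hp0.ne', h0] at hsc
  -- hsc : h ((lam * v ^ (1/p)) ^ p) ≤ lam * h ((v ^ (1/p)) ^ p)
  rw [Real.mul_rpow hlam0 (Real.rpow_nonneg hv _), hrwp hθ0, hrwp hv] at hsc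
  exact hsc

lemma convex_grow (hp : 1 ≤ p) (hmono : MonotoneOn h (Set.Ici 0)) (h0 : h 0 = 0)
    (hconv : ConvexOn ℝ (Set.Ici 0) (fun t => h (t ^ p)))
    {K v : ℝ} (hK : 1 ≤ K) (hv : 0 ≤ v) :
    K * h v ≤ h (K ^ p * v) := by
  have hp0 : 0 < p := lt_of_lt_of_le one_pos hp
  have hK0 : (0:ℝ) < K := lt_of_lt_of_le one_pos hK
  have hKp1 : (1:ℝ) ≤ K ^ p := Real.one_le_rpow hK hp0.le
  have hKpp : (0:ℝ) < K ^ p := lt_of_lt_of_le one_pos hKp1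
  have hstep := convex_shrink hp hmono h0 hconv (θ := (K^p)⁻¹) (v := K^p * v)
    (inv_nonneg.2 hKpp.le) (inv_le_one_of_one_le₀ hKp1) (mul_nonneg hKpp.le hv)
  rw [inv_mul_cancel_left₀ hKpp.ne'] at hstep
  have heq : ((K^p)⁻¹ : ℝ) ^ (1/p) = K⁻¹ := by
    rw [← Real.rpow_neg hK0.le p, ← Real.rpow_mul hK0.le]
    rw [show -p * (1/p) = (-1 : ℝ) by field_simp]
    exact Real.rpow_neg_one K
  rw [heq] at hstep
  calc K * h v ≤ K * (K⁻¹ * h (K ^ p * v)) :=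
        mul_le_mul_of_nonneg_left hstep hK0.le
    _ = h (K ^ p * v) := by rw [mul_inv_cancel_left₀ hK0.ne']

end Main


-- ### basic representation lemmas

lemma repr_iff {z : ℂ} (hz : z ≠ 0) (θ : ℝ) :
    z = (‖z‖ : ℂ) * Complex.exp (θ * Complex.I) ↔
      ∃ m : ℤ, θ = Complex.arg z + 2 * Real.pi * m := by
  constructor
  · intro hrep
    have h1 : (‖z‖ : ℂ) * Complex.exp (Complex.arg z * Complex.I) = z :=
      Complex.norm_mul_exp_arg_mul_I z
    have habs : (‖z‖ : ℂ) ≠ 0 := by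
      simpa using (norm_ne_zero_iff.mpr hz)
    have h2 : Complex.exp ((θ:ℂ) * Complex.I) = Complex.exp ((Complex.arg z : ℂ) * Complex.I) :=
      mul_left_cancel₀ habs (by rw [h1, ← hrep])
    have h3 : Complex.exp (((θ:ℂ) - Complex.arg z) * Complex.I) = 1 := by
      rw [sub_mul, Complex.exp_sub, h2, div_self (Complex.exp_ne_zero _)]
    obtain ⟨m, hm⟩ := Complex.exp_eq_one_iff.1 h3
    refine ⟨m, ?_⟩
    have hm' : ((θ:ℂ) - Complex.arg z) * Complex.I = ((m:ℂ) * (2*Real.pi)) * Complex.I := by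
      rw [hm]; ring
    have hm2 : (θ:ℂ) - Complex.arg z = (m:ℂ) * (2*Real.pi) :=
      mul_right_cancel₀ Complex.I_ne_zero hm'
    have : θ - Complex.arg z = (m:ℝ) * (2*Real.pi) := by exact_mod_cast hm2
    linarith
  · rintro ⟨m, rfl⟩
    have : Complex.exp ((↑(Complex.arg z + 2*Real.pi*m) : ℂ) * Complex.I)
        = Complex.exp ((Complex.arg z : ℂ) * Complex.I) := by
      push_cast
      rw [add_mul, Complex.exp_add]
      rw [show ((2:ℂ)*Real.pi*m*Complex.I) = (m:ℂ) * (2*Real.pi*Complex.I) by ring,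
        Complex.exp_int_mul_two_pi_mul_I, mul_one]
    rw [this, Complex.norm_mul_exp_arg_mul_I z]

lemma onArc_iff_s12 {n k : ℕ} {z : ℂ} (hz : z ≠ 0) :
    onArc n k z ↔ ∃ m : ℤ, 2*Real.pi*k/2^n ≤ Complex.arg z + 2*Real.pi*m ∧
      Complex.arg z + 2*Real.pi*m < 2*Real.pi*(k+1)/2^n := by
  constructor
  · rintro ⟨θ, h1, h2, hrep⟩
    obtain ⟨m, rfl⟩ := (repr_iff hz θ).1 hrep
    exact ⟨m, h1, h2⟩
  · rintro ⟨m, h1, h2⟩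
    exact ⟨_, h1, h2, (repr_iff hz _).2 ⟨m, rfl⟩⟩

lemma half_pow_le_s12 {n : ℕ} (hn : 1 ≤ n) : ((1:ℝ)/2)^n ≤ 1/2 := by
  calc ((1:ℝ)/2)^n ≤ ((1:ℝ)/2)^1 :=
        pow_le_pow_of_le_one (by norm_num) (by norm_num) hn
    _ = 1/2 := pow_one _

lemma window_ne_zero {n : ℕ} (hn : 1 ≤ n) {z : ℂ}
    (hz : 1 - ‖z‖ ≤ (1/2:ℝ)^n) : z ≠ 0 := by
  intro h0
  rw [h0] at hz
  simp only [norm_zero, sub_zero] at hz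
  have := half_pow_le_s12 hn
  linarith

lemma measurable_angCond (a b : ℝ) :
    MeasurableSet {z : ℂ | ∃ m : ℤ,
      a ≤ Complex.arg z + 2*Real.pi*m ∧ Complex.arg z + 2*Real.pi*m < b} := by
  have heq : {z : ℂ | ∃ m : ℤ,
      a ≤ Complex.arg z + 2*Real.pi*m ∧ Complex.arg z + 2*Real.pi*m < b}
      = ⋃ m : ℤ, Complex.arg ⁻¹' (Set.Ico (a - 2*Real.pi*m) (b - 2*Real.pi*m)) := by
    ext z
    simp only [Set.mem_setOf_eq, Set.mem_iUnion, Set.mem_preimage, Set.mem_Ico]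
    constructor
    · rintro ⟨m, h1, h2⟩; exact ⟨m, by linarith, by linarith⟩
    · rintro ⟨m, h1, h2⟩; exact ⟨m, by linarith, by linarith⟩
  rw [heq]
  exact MeasurableSet.iUnion fun m => Complex.measurable_arg measurableSet_Ico

lemma mem_unitDisc_iff {z : ℂ} : z ∈ unitDisc ↔ ‖z‖ < 1 := by
  simp [unitDisc, Metric.mem_ball, dist_zero_right]

lemma measurableSet_Rwin {n : ℕ} (hn : 1 ≤ n) (k : ℕ) : MeasurableSet (Rwin n k) := by
  have habs : Measurable (fun z : ℂ => ‖z‖) := continuous_norm.measurable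
  have heq : Rwin n k = ({z : ℂ | ‖z‖ < 1}
      ∩ ({z | (1/2:ℝ)^n/2 < 1 - ‖z‖} ∩ {z | 1 - ‖z‖ ≤ (1/2:ℝ)^n}))
      ∩ {z : ℂ | ∃ m : ℤ, 2*Real.pi*k/2^n ≤ Complex.arg z + 2*Real.pi*m ∧
          Complex.arg z + 2*Real.pi*m < 2*Real.pi*(k+1)/2^n} := by
    ext z
    simp only [Rwin, Set.mem_setOf_eq, Set.mem_inter_iff, mem_unitDisc_iff]
    constructor
    · rintro ⟨h1, h2, h3, h4⟩
      exact ⟨⟨h1, h2, h3⟩, (onArc_iff_s12 (window_ne_zero hn h3)).1 h4⟩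
    · rintro ⟨⟨h1, h2, h3⟩, h4⟩
      exact ⟨h1, h2, h3, (onArc_iff_s12 (window_ne_zero hn h3)).2 h4⟩
  rw [heq]
  refine MeasurableSet.inter (MeasurableSet.inter ?_ (MeasurableSet.inter ?_ ?_))
    (measurable_angCond _ _)
  · exact measurableSet_lt habs measurable_const
  · exact measurableSet_lt measurable_const (measurable_const.sub habs)
  · exact measurableSet_le (measurable_const.sub habs) measurable_const

-- ### shift invariance

lemma exp_shift (θ : ℝ) :
    Complex.exp ((↑(θ + 2*Real.pi) : ℂ) * Complex.I) = Complex.exp ((θ:ℂ) * Complex.I) := by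
  push_cast
  rw [add_mul, Complex.exp_add, Complex.exp_two_pi_mul_I, mul_one]

lemma onArc_shift (n k : ℕ) (z : ℂ) : onArc n (k + 2^n) z ↔ onArc n k z := by
  have h2n : ((2:ℝ))^n ≠ 0 := by positivity
  have hkey : 2*Real.pi*((k:ℝ) + (2:ℝ)^n)/2^n = 2*Real.pi*k/2^n + 2*Real.pi := by
    field_simp
  have hkey1 : 2*Real.pi*(((k:ℝ) + (2:ℝ)^n) + 1)/2^n
      = 2*Real.pi*((k:ℝ)+1)/2^n + 2*Real.pi := by
    field_simp; ring
  have hc : ((k + 2^n : ℕ) : ℝ) = (k:ℝ) + 2^n := by push_cast; ring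
  constructor
  · rintro ⟨θ, h1, h2, hrep⟩
    rw [hc, hkey] at h1
    rw [hc, hkey1] at h2
    refine ⟨θ - 2*Real.pi, by linarith, by linarith, ?_⟩
    have he : Complex.exp ((↑(θ - 2*Real.pi) : ℂ) * Complex.I)
        = Complex.exp ((θ:ℂ) * Complex.I) := by
      have harg : θ - 2*Real.pi + 2*Real.pi = θ := by ring
      conv_rhs => rw [← harg]
      exact (exp_shift (θ - 2*Real.pi)).symm
    rw [he]; exact hrep
  · rintro ⟨θ, h1, h2, hrep⟩
    refine ⟨θ + 2*Real.pi, ?_, ?_, ?_⟩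
    · rw [hc, hkey]; linarith
    · rw [hc, hkey1]; linarith
    · rw [exp_shift θ]; exact hrep

lemma Wwin_shift (n k : ℕ) : Wwin n (k + 2^n) = Wwin n k := by
  ext z; simp only [Wwin, Set.mem_setOf_eq, onArc_shift]

lemma Rwin_shift (n k : ℕ) : Rwin n (k + 2^n) = Rwin n k := by
  ext z; simp only [Rwin, Set.mem_setOf_eq, onArc_shift]

-- ### decomposition

lemma ath_scale (n d J : ℕ) :
    2*Real.pi*(J:ℝ)/2^n = 2*Real.pi*((J*2^d : ℕ):ℝ)/2^(n+d) := by
  have h1 : ((2:ℝ))^n ≠ 0 := by positivity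
  have h2 : ((2:ℝ))^d ≠ 0 := by positivity
  push_cast
  rw [pow_add]
  field_simp

lemma ath_mono (N : ℕ) {a b : ℕ} (hab : a ≤ b) :
    2*Real.pi*(a:ℝ)/2^N ≤ 2*Real.pi*(b:ℝ)/2^N := by
  have hpi := Real.pi_pos
  gcongr <;> exact_mod_cast hab

lemma Rwin_subset_Wwin {n : ℕ} (hn : 1 ≤ n) (k d i : ℕ) (hi : i < 2^d) :
    Rwin (n+d) (k*2^d+i) ⊆ Wwin n k := by
  intro z hzR
  obtain ⟨hzD, hrad1, hrad2, harc⟩ := hzR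
  have hz0 : z ≠ 0 := window_ne_zero (by omega) hrad2
  have hpi := Real.pi_pos
  have hradW : 1 - ‖z‖ ≤ (1/2:ℝ)^n :=
    le_trans hrad2 (pow_le_pow_of_le_one (by norm_num) (by norm_num) (by omega))
  refine ⟨hzD, hradW, ?_⟩
  rw [onArc_iff_s12 hz0]
  obtain ⟨m, hm1, hm2⟩ := (onArc_iff_s12 hz0).1 harc
  have hnat : k*2^d + i + 1 ≤ (k+1)*2^d := by
    have he : (k+1)*2^d = k*2^d + 2^d := by ring
    omega
  refine ⟨m, ?_, ?_⟩
  · calc 2*Real.pi*(k:ℝ)/2^n = 2*Real.pi*((k*2^d : ℕ):ℝ)/2^(n+d) := ath_scale n d k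
      _ ≤ 2*Real.pi*((k*2^d+i : ℕ):ℝ)/2^(n+d) := ath_mono _ (by omega)
      _ ≤ _ := hm1
  · have hc2 : ((k*2^d+i : ℕ):ℝ) + 1 = ((k*2^d+i+1 : ℕ):ℝ) := by push_cast; ring
    rw [hc2] at hm2
    have hc3 : ((k:ℝ)+1) = (((k+1) : ℕ):ℝ) := by push_cast; ring
    rw [hc3]
    calc Complex.arg z + 2*Real.pi*m < 2*Real.pi*((k*2^d+i+1 : ℕ):ℝ)/2^(n+d) := hm2
      _ ≤ 2*Real.pi*(((k+1)*2^d : ℕ):ℝ)/2^(n+d) := ath_mono _ hnat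
      _ = 2*Real.pi*(((k+1) : ℕ):ℝ)/2^n := (ath_scale n d (k+1)).symm

lemma Wwin_subset_iUnion {n : ℕ} (hn : 1 ≤ n) (k : ℕ) {z : ℂ} (hzW : z ∈ Wwin n k) :
    ∃ d i : ℕ, i < 2^d ∧ z ∈ Rwin (n+d) (k*2^d+i) := by
  obtain ⟨hzD, hw2, hw3⟩ := hzW
  have hz0 : z ≠ 0 := window_ne_zero hn hw2
  have hpi := Real.pi_pos
  have ht0 : 0 < 1 - ‖z‖ := by
    have := mem_unitDisc_iff.1 hzD; linarith
  have hex : ∃ d : ℕ, ((1:ℝ)/2)^(n+d+1) < 1 - ‖z‖ := by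
    obtain ⟨N, hN⟩ := exists_pow_lt_of_lt_one ht0 (by norm_num : (1:ℝ)/2 < 1)
    exact ⟨N, lt_of_le_of_lt
      (pow_le_pow_of_le_one (by norm_num) (by norm_num) (by omega)) hN⟩
  set d := Nat.find hex with hd
  have hdlt : ((1:ℝ)/2)^(n+d+1) < 1 - ‖z‖ := Nat.find_spec hex
  have hdle : 1 - ‖z‖ ≤ ((1:ℝ)/2)^(n+d) := by
    rcases Nat.eq_zero_or_pos d with h0 | hpos
    · rw [h0, add_zero]; exact hw2
    · have hmin := Nat.find_min hex (m := d - 1) (by omega)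
      have hrw : n + (d-1) + 1 = n + d := by omega
      rw [hrw] at hmin
      exact not_lt.1 hmin
  obtain ⟨m, hm1, hm2⟩ := (onArc_iff_s12 hz0).1 hw3
  have h2N : (0:ℝ) < 2^(n+d) := by positivity
  have h2pi : (0:ℝ) < 2*Real.pi := by positivity
  set θ := Complex.arg z + 2*Real.pi*m with hθdef
  have hθ0 : 0 ≤ θ := le_trans (by positivity) hm1
  set x := θ * 2^(n+d) / (2*Real.pi) with hxdef
  have hx0 : 0 ≤ x := by positivity
  have hxl : ((k * 2^d : ℕ) : ℝ) ≤ x := by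
    rw [hxdef, le_div_iff₀ h2pi]
    have h1 : 2*Real.pi*k/2^n * 2^(n+d) ≤ θ * 2^(n+d) := by gcongr
    have h2 : 2*Real.pi*(k:ℝ)/2^n * 2^(n+d) = ((k * 2^d : ℕ):ℝ)*(2*Real.pi) := by
      push_cast
      rw [pow_add]
      field_simp
    exact h2 ▸ h1
  have hxu : x < (((k+1) * 2^d : ℕ) : ℝ) := by
    rw [hxdef, div_lt_iff₀ h2pi]
    have h1 : θ * 2^(n+d) < 2*Real.pi*((k:ℝ)+1)/2^n * 2^(n+d) := by gcongr
    have h2 : 2*Real.pi*((k:ℝ)+1)/2^n * 2^(n+d) = (((k+1) * 2^d : ℕ):ℝ)*(2*Real.pi) := by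
      push_cast
      rw [pow_add]
      field_simp
    exact h2 ▸ h1
  set j := Nat.floor x with hjdef
  have hjl : k * 2^d ≤ j := Nat.le_floor hxl
  have hju : j < (k+1) * 2^d := (Nat.floor_lt hx0).2 hxu
  have hjx : (j:ℝ) ≤ x := Nat.floor_le hx0
  have hjx1 : x < (j:ℝ) + 1 := Nat.lt_floor_add_one x
  have hθl : 2*Real.pi*j/2^(n+d) ≤ θ := by
    rw [hxdef, le_div_iff₀ h2pi] at hjx
    rw [div_le_iff₀ h2N]
    linarith
  have hθu : θ < 2*Real.pi*((j:ℝ)+1)/2^(n+d) := by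
    rw [hxdef, div_lt_iff₀ h2pi] at hjx1
    rw [lt_div_iff₀ h2N]
    linarith
  have hilt : j - k*2^d < 2^d := by
    have : j < k*2^d + 2^d := by
      have he : (k+1)*2^d = k*2^d + 2^d := by ring
      rw [he] at hju; exact hju
    omega
  refine ⟨d, j - k*2^d, hilt, ?_⟩
  have hji : k*2^d + (j - k*2^d) = j := by omega
  rw [hji]
  refine ⟨hzD, ?_, hdle, ?_⟩
  · have hps : ((1:ℝ)/2)^(n+d) / 2 = ((1:ℝ)/2)^(n+d+1) := by rw [pow_succ]; ring
    rw [hps]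
    exact hdlt
  · rw [onArc_iff_s12 hz0]
    exact ⟨m, hθl, hθu⟩

lemma Rwin_disjoint {n : ℕ} (hn : 1 ≤ n) (k : ℕ) {d i d' i' : ℕ}
    (hi : i < 2^d) (hi' : i' < 2^d') (hne : ¬(d = d' ∧ i = i')) :
    Disjoint (Rwin (n+d) (k*2^d+i)) (Rwin (n+d') (k*2^d'+i')) := by
  rw [Set.disjoint_left]
  rintro z hz hz'
  obtain ⟨hzD, hr1, hr2, harc⟩ := hz
  obtain ⟨_, hr1', hr2', harc'⟩ := hz'
  have hz0 : z ≠ 0 := window_ne_zero (by omega) hr2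
  have hpi := Real.pi_pos
  rcases Nat.lt_trichotomy d d' with hdd | hdd | hdd
  · have hmono : ((1:ℝ)/2)^(n+d') ≤ ((1:ℝ)/2)^(n+d+1) :=
      pow_le_pow_of_le_one (by norm_num) (by norm_num) (by omega)
    have h3 : ((1:ℝ)/2)^(n+d+1) = ((1:ℝ)/2)^(n+d)/2 := by rw [pow_succ]; ring
    linarith
  · subst hdd
    have hii : i ≠ i' := fun hc => hne ⟨rfl, hc⟩
    obtain ⟨m, hm1, hm2⟩ := (onArc_iff_s12 hz0).1 harc
    obtain ⟨m', hm1', hm2'⟩ := (onArc_iff_s12 hz0).1 harc'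
    have h2N : (0:ℝ) < 2^(n+d) := by positivity
    have hAmono : ∀ a b : ℕ, a ≤ b →
        2*Real.pi*(a:ℝ)/2^(n+d) ≤ 2*Real.pi*(b:ℝ)/2^(n+d) := by
      intro a b hab
      gcongr <;> exact_mod_cast hab
    have hcast : ∀ a : ℕ, ((a:ℝ) + 1) = ((a+1 : ℕ) : ℝ) := by intro a; push_cast; ring
    rw [hcast] at hm2 hm2'
    have hle : k*2^d + i + 1 ≤ (k+1)*2^d := by
      have he : (k+1)*2^d = k*2^d + 2^d := by ring
      omega
    have hle' : k*2^d + i' + 1 ≤ (k+1)*2^d := by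
      have he : (k+1)*2^d = k*2^d + 2^d := by ring
      omega
    have hL : 2*Real.pi*((k*2^d : ℕ):ℝ)/2^(n+d) ≤ Complex.arg z + 2*Real.pi*m :=
      le_trans (hAmono (k*2^d) (k*2^d+i) (by omega)) hm1
    have hL' : 2*Real.pi*((k*2^d : ℕ):ℝ)/2^(n+d) ≤ Complex.arg z + 2*Real.pi*m' :=
      le_trans (hAmono (k*2^d) (k*2^d+i') (by omega)) hm1'
    have hU : Complex.arg z + 2*Real.pi*m < 2*Real.pi*(((k+1)*2^d : ℕ):ℝ)/2^(n+d) :=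
      lt_of_lt_of_le hm2 (hAmono (k*2^d+i+1) ((k+1)*2^d) hle)
    have hU' : Complex.arg z + 2*Real.pi*m' < 2*Real.pi*(((k+1)*2^d : ℕ):ℝ)/2^(n+d) :=
      lt_of_lt_of_le hm2' (hAmono (k*2^d+i'+1) ((k+1)*2^d) hle')
    have hUL : 2*Real.pi*(((k+1)*2^d : ℕ):ℝ)/2^(n+d)
        ≤ 2*Real.pi*((k*2^d : ℕ):ℝ)/2^(n+d) + Real.pi := by
      have e : 2*Real.pi*(((k+1)*2^d : ℕ):ℝ)/2^(n+d)
          - 2*Real.pi*((k*2^d : ℕ):ℝ)/2^(n+d) = 2*Real.pi*(2:ℝ)^d/2^(n+d) := by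
        push_cast
        field_simp
        ring
      have h2n : (2:ℝ) ≤ 2^n := by
        calc (2:ℝ) = 2^1 := (pow_one 2).symm
          _ ≤ 2^n := pow_le_pow_right₀ (by norm_num) hn
      have hlen : 2*Real.pi*(2:ℝ)^d/2^(n+d) ≤ Real.pi := by
        rw [pow_add, div_le_iff₀ (by positivity)]
        have hh := mul_le_mul_of_nonneg_right h2n
          (mul_nonneg hpi.le (pow_pos (by norm_num : (0:ℝ) < 2) d).le)
        nlinarith [hh]
      linarith
    -- m = m'
    have hdiff : (Complex.arg z + 2*Real.pi*m') - (Complex.arg z + 2*Real.pi*m)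
        = 2*Real.pi*((m':ℝ) - m) := by push_cast; ring
    have habs1 : 2*Real.pi*((m':ℝ) - m) < Real.pi := by
      have := hU'; have := hL; linarith [hdiff]
    have habs2 : -Real.pi < 2*Real.pi*((m':ℝ) - m) := by
      have := hU; have := hL'; linarith [hdiff]
    have hmm : m' = m := by
      have hb1 : ((m' - m : ℤ):ℝ) < 1 := by push_cast; nlinarith
      have hb2 : (-1:ℝ) < ((m' - m : ℤ):ℝ) := by push_cast; nlinarith
      have hb1' : (m' - m : ℤ) < 1 := by exact_mod_cast hb1
      have hb2' : (-1 : ℤ) < (m' - m : ℤ) := by exact_mod_cast hb2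
      omega
    subst hmm
    rcases Nat.lt_or_ge i i' with hlt | hge
    · have hstep : k*2^d + i + 1 ≤ k*2^d + i' := by omega
      have := lt_of_lt_of_le hm2 (le_trans (hAmono _ _ hstep) hm1')
      exact lt_irrefl _ this
    · have hlt : i' < i := by omega
      have hstep : k*2^d + i' + 1 ≤ k*2^d + i := by omega
      have := lt_of_lt_of_le hm2' (le_trans (hAmono _ _ hstep) hm1)
      exact lt_irrefl _ this
  · have hmono : ((1:ℝ)/2)^(n+d) ≤ ((1:ℝ)/2)^(n+d'+1) :=
      pow_le_pow_of_le_one (by norm_num) (by norm_num) (by omega)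
    have h3 : ((1:ℝ)/2)^(n+d'+1) = ((1:ℝ)/2)^(n+d')/2 := by rw [pow_succ]; ring
    linarith

lemma mu_Wwin (μ : Measure ℂ) {n : ℕ} (hn : 1 ≤ n) (k : ℕ) :
    μ (Wwin n k) = ∑' q : ℕ × ℕ,
      μ (if q.2 < 2^q.1 then Rwin (n+q.1) (k*2^q.1+q.2) else ∅) := by
  classical
  have hunion : Wwin n k = ⋃ q : ℕ × ℕ,
      (if q.2 < 2^q.1 then Rwin (n+q.1) (k*2^q.1+q.2) else ∅) := by
    ext z
    simp only [Set.mem_iUnion]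
    constructor
    · intro hz
      obtain ⟨d, i, hi, hzi⟩ := Wwin_subset_iUnion hn k hz
      exact ⟨(d, i), by simp only [if_pos hi]; exact hzi⟩
    · rintro ⟨⟨d, i⟩, hz⟩
      by_cases hi : i < 2^d
      · rw [if_pos hi] at hz
        exact Rwin_subset_Wwin hn k d i hi hz
      · rw [if_neg hi] at hz
        exact absurd hz (Set.notMem_empty z)
  have hdisj : Pairwise (Function.onFun Disjoint
      (fun q : ℕ × ℕ => if q.2 < 2^q.1 then Rwin (n+q.1) (k*2^q.1+q.2) else ∅)) := by
    rintro ⟨d, i⟩ ⟨d', i'⟩ hne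
    simp only [Function.onFun]
    by_cases hi : i < 2^d
    · by_cases hi' : i' < 2^d'
      · rw [if_pos hi, if_pos hi']
        exact Rwin_disjoint hn k hi hi' (fun ⟨h1, h2⟩ => hne (by rw [h1, h2]))
      · rw [if_neg hi']; exact disjoint_empty _
    · rw [if_neg hi]; exact empty_disjoint _
  have hmeas : ∀ q : ℕ × ℕ, MeasurableSet
      (if q.2 < 2^q.1 then Rwin (n+q.1) (k*2^q.1+q.2) else ∅) := by
    rintro ⟨d, i⟩
    by_cases hi : i < 2^d
    · rw [if_pos hi]; exact measurableSet_Rwin (by omega) _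
    · rw [if_neg hi]; exact MeasurableSet.empty
  rw [hunion, measure_iUnion hdisj hmeas]


-- ## arcLen facts
lemma arcLen_pos (N : ℕ) : 0 < arcLen N := by
  rw [arcLen]; positivity

lemma arcLen_inv (N : ℕ) : (arcLen N)⁻¹ = (2:ℝ)^N/(2*Real.pi) := by
  rw [arcLen, inv_div]

-- ## Node-level bound
lemma node_bound {ε : ℝ} {h : ℝ → ℝ} (hε0 : 0 < ε) (hε1 : ε < 1)
    (hmono : MonotoneOn h (Set.Ici 0)) (h0 : h 0 = 0) (hnn : ∀ t ∈ Set.Ici (0:ℝ), 0 ≤ h t)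
    (hconc : ConcaveOn ℝ (Set.Ici 0) (fun t => h (t ^ ε)))
    (μ : Measure ℂ) (n k : ℕ) (hn : 1 ≤ n)
    (c τ C η : ℝ) (hc0 : 0 < c) (hτ0 : 0 < τ) (hτ2 : 2*τ < 1) (hcτ : c = 1 - 2*τ)
    (hid : ∀ d : ℕ, (c*τ^d)^(ε-1) * ((2:ℝ)^n/(2*Real.pi))
      = C*η^d*((2:ℝ)^(n+d)/(2*Real.pi))) :
    ENNReal.ofReal (h ((μ (Wwin n k)).toReal / arcLen n)) ≤
      ∑' q : ℕ × ℕ, (if q.2 < 2^q.1 then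
        ENNReal.ofReal (h (C * η^q.1 *
          ((μ (Rwin (n+q.1) (k*2^q.1+q.2))).toReal / arcLen (n+q.1)))) else 0) := by
  classical
  rcases eq_or_ne (μ (Wwin n k)) ⊤ with htop | htop
  · rw [htop]
    simp [h0]
  set Fam : ℕ × ℕ → Set ℂ :=
    fun q => if q.2 < 2^q.1 then Rwin (n+q.1) (k*2^q.1+q.2) else ∅ with hFam
  have hμW : μ (Wwin n k) = ∑' q : ℕ × ℕ, μ (Fam q) := mu_Wwin μ hn k
  have hne : (∑' q : ℕ × ℕ, μ (Fam q)) ≠ ⊤ := by rw [← hμW]; exact htop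
  have hfin : ∀ q : ℕ × ℕ, μ (Fam q) ≠ ⊤ :=
    fun q => ne_top_of_le_ne_top hne (ENNReal.le_tsum q)
  set x : ℕ × ℕ → ℝ := fun q => (μ (Fam q)).toReal / arcLen n with hx_def
  have hx : ∀ q, 0 ≤ x q := fun q => div_nonneg ENNReal.toReal_nonneg (arcLen_pos n).le
  have hxs : Summable x := (ENNReal.summable_toReal hne).div_const _
  have hxsum : ∑' q, x q = (μ (Wwin n k)).toReal / arcLen n := by
    rw [hx_def]
    rw [tsum_div_const, ← ENNReal.tsum_toReal_eq hfin, ← hμW]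
  set lam : ℕ × ℕ → ℝ := fun q => if q.2 < 2^q.1 then c*τ^q.1 else 0 with hlam_def
  have hcτpos : ∀ d : ℕ, 0 < c*τ^d := fun d => mul_pos hc0 (pow_pos hτ0 d)
  have hlam0 : ∀ q, 0 ≤ lam q := by
    intro q
    by_cases hq : q.2 < 2^q.1
    · simp only [hlam_def, if_pos hq]; exact (hcτpos q.1).le
    · simp only [hlam_def, if_neg hq]; exact le_rfl
  have hxz : ∀ q : ℕ × ℕ, ¬ (q.2 < 2^q.1) → x q = 0 := by
    intro q hq
    simp only [hx_def, hFam, if_neg hq, measure_empty, ENNReal.toReal_zero, zero_div]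
  have hlamx : ∀ q, x q ≠ 0 → 0 < lam q := by
    intro q hxq
    by_cases hq : q.2 < 2^q.1
    · simp only [hlam_def, if_pos hq]; exact hcτpos q.1
    · exact absurd (hxz q hq) hxq
  have h2τ0 : (0:ℝ) ≤ 2*τ := by linarith
  have hfiber : ∀ d : ℕ, ∑' i : ℕ, lam (d, i) = c*(2*τ)^d := by
    intro d
    have hsupp : ∀ i ∉ Finset.range (2^d), lam (d, i) = 0 := by
      intro i hi
      simp only [hlam_def]
      rw [if_neg (by simpa using hi)]
    rw [tsum_eq_sum hsupp]
    have : ∀ i ∈ Finset.range (2^d), lam (d, i) = c*τ^d := by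
      intro i hi
      simp only [hlam_def]
      rw [if_pos (by simpa using hi)]
    rw [Finset.sum_congr rfl this, Finset.sum_const, Finset.card_range, nsmul_eq_mul]
    rw [mul_pow]
    push_cast
    ring
  have hfibsummable : ∀ d : ℕ, Summable fun i => lam (d, i) := by
    intro d
    apply summable_of_ne_finset_zero (s := Finset.range (2^d))
    intro i hi
    simp only [hlam_def]
    rw [if_neg (by simpa using hi)]
  have hgeom : Summable fun d : ℕ => c*(2*τ)^d :=
    (summable_geometric_of_lt_one h2τ0 hτ2).mul_left c
  have hlams : Summable lam := by
    have hlam0' : (0 : ℕ × ℕ → ℝ) ≤ lam := fun q => hlam0 q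
    rw [summable_prod_of_nonneg hlam0']
    constructor
    · exact hfibsummable
    · apply hgeom.congr
      intro d
      exact (hfiber d).symm
  have hlam1 : ∑' q, lam q ≤ 1 := by
    have := Summable.tsum_prod hlams
    rw [this]
    have : ∑' (d : ℕ) (i : ℕ), lam (d, i) = ∑' d : ℕ, c*(2*τ)^d :=
      tsum_congr hfiber
    rw [this, tsum_mul_left, tsum_geometric_of_lt_one h2τ0 hτ2, hcτ]
    rw [mul_inv_cancel₀ (by linarith : (1:ℝ) - 2*τ ≠ 0)]
  have hmain := CL1 hε0 hε1 hmono h0 hnn hconc x lam hx hxs hlam0 hlams hlam1 hlamx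
  rw [hxsum] at hmain
  refine le_trans hmain (le_of_eq (tsum_congr ?_))
  rintro ⟨d, i⟩
  by_cases hq : i < 2^d
  · rw [if_pos hq]
    congr 1
    simp only [hlam_def, hx_def, hFam]
    rw [if_pos hq, if_pos hq]
    have harc1 : ∀ (t : ℝ) (N : ℕ), t / arcLen N = t * ((2:ℝ)^N/(2*Real.pi)) := by
      intro t N
      rw [div_eq_mul_inv, arcLen_inv]
    rw [harc1 _ n, harc1 _ (n+d), ← mul_assoc, ← mul_assoc]
    rw [show (c*τ^d)^(ε-1) * (μ (Rwin (n+d) (k*2^d+i))).toReal * ((2:ℝ)^n/(2*Real.pi))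
        = ((c*τ^d)^(ε-1) * ((2:ℝ)^n/(2*Real.pi))) * (μ (Rwin (n+d) (k*2^d+i))).toReal
        by ring]
    rw [hid d]
    ring
  · rw [if_neg hq]
    simp only [hlam_def, hx_def, hFam, if_neg hq]
    rw [Real.zero_rpow (by linarith : ε - 1 ≠ 0)]
    simp [h0]

-- ## geometric tail bound
lemma geom_tail_bound {p : ℝ} {h : ℝ → ℝ} (hp : 1 ≤ p)
    (hmono : MonotoneOn h (Set.Ici 0)) (h0 : h 0 = 0)
    (hnn : ∀ t ∈ Set.Ici (0:ℝ), 0 ≤ h t)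
    (hconv : ConvexOn ℝ (Set.Ici 0) (fun t => h (t ^ p)))
    (C η : ℝ) (hC0 : 0 < C) (hη0 : 0 < η) (hη1 : η < 1) (v : ℝ) (hv : 0 ≤ v) (m : ℕ) :
    ∑ d ∈ Finset.range m, ENNReal.ofReal (h (C * η^d * v))
      ≤ ENNReal.ofReal (h ((C * ((1 - η^(1/p))⁻¹)^p) * v)) := by
  have hp0 : 0 < p := lt_of_lt_of_le one_pos hp
  set ρ : ℝ := η^(1/p) with hρ_def
  have hρ0 : 0 < ρ := Real.rpow_pos_of_pos hη0 _
  have hρ1 : ρ < 1 := Real.rpow_lt_one hη0.le hη1 (by positivity)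
  set A : ℝ := (1 - ρ)⁻¹ with hA_def
  have hA1 : 1 ≤ A := (one_le_inv₀ (by linarith)).2 (by linarith)
  have hCv : 0 ≤ C * v := mul_nonneg hC0.le hv
  have hterm : ∀ d : ℕ, h (C * η^d * v) ≤ ρ^d * h (C*v) := by
    intro d
    have he : C * η^d * v = η^d * (C*v) := by ring
    rw [he]
    have hb := convex_shrink hp hmono h0 hconv
      (θ := η^d) (v := C*v) (pow_nonneg hη0.le d)
      (pow_le_one₀ hη0.le hη1.le) hCv
    have herw : (η^d : ℝ)^(1/p) = ρ^d := by
      rw [← Real.rpow_natCast η d, ← Real.rpow_mul hη0.le, mul_comm,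
        Real.rpow_mul hη0.le, Real.rpow_natCast]
    rwa [herw] at hb
  have hnonneg : ∀ d : ℕ, 0 ≤ h (C * η^d * v) := by
    intro d
    exact hnn _ (Set.mem_Ici.2 (mul_nonneg (mul_nonneg hC0.le (pow_nonneg hη0.le d)) hv))
  have hsum : ∑ d ∈ Finset.range m, h (C * η^d * v) ≤ A * h (C*v) := by
    have h1 : ∑ d ∈ Finset.range m, h (C * η^d * v)
        ≤ ∑ d ∈ Finset.range m, ρ^d * h (C*v) :=
      Finset.sum_le_sum fun d _ => hterm d
    have h2 : ∑ d ∈ Finset.range m, ρ^d * h (C*v)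
        = (∑ d ∈ Finset.range m, ρ^d) * h (C*v) := by
      rw [← Finset.sum_mul]
    have h3 : ∑ d ∈ Finset.range m, ρ^d ≤ A := by
      rw [hA_def, ← tsum_geometric_of_lt_one hρ0.le hρ1]
      exact Summable.sum_le_tsum _ (fun d _ => (pow_nonneg hρ0.le d))
        (summable_geometric_of_lt_one hρ0.le hρ1)
    have h4 : (∑ d ∈ Finset.range m, ρ^d) * h (C*v) ≤ A * h (C*v) :=
      mul_le_mul_of_nonneg_right h3 (hnn _ (Set.mem_Ici.2 hCv))
    linarith
  have hgrow : A * h (C*v) ≤ h (A^p * (C*v)) := convex_grow hp hmono h0 hconv hA1 hCv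
  calc ∑ d ∈ Finset.range m, ENNReal.ofReal (h (C * η^d * v))
      = ENNReal.ofReal (∑ d ∈ Finset.range m, h (C * η^d * v)) :=
        (ENNReal.ofReal_sum_of_nonneg fun d _ => hnonneg d).symm
    _ ≤ ENNReal.ofReal (h ((C * A^p) * v)) := by
        apply ENNReal.ofReal_le_ofReal
        have he : A^p * (C*v) = (C * A^p) * v := by ring
        rw [he] at hgrow
        linarith


-- ## reindex dyadic ↔ heap
lemma heap_reindex (G : ℕ → ℕ → ℝ≥0∞) (hG : ∀ n k : ℕ, G n (k + 2^n) = G n k) :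
    (∑' q : dyadicSet, G (q : ℕ × ℕ).1 (q : ℕ × ℕ).2)
      = ∑' p : ℕ × ℕ,
          (if 1 ≤ p.1 ∧ 2^p.1 ≤ p.2 ∧ p.2 < 2^(p.1+1) then G p.1 p.2 else 0) := by
  classical
  rw [tsum_subtype dyadicSet (fun p : ℕ × ℕ => G p.1 p.2)]
  symm
  apply tsum_eq_tsum_of_ne_zero_bij
    (g := fun p : ℕ × ℕ => dyadicSet.indicator (fun p : ℕ × ℕ => G p.1 p.2) p)
    (i := fun x => ((x : ℕ × ℕ).1,
      if (x : ℕ × ℕ).2 = 2^(x : ℕ × ℕ).1 then 2^(x : ℕ × ℕ).1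
      else (x : ℕ × ℕ).2 + 2^(x : ℕ × ℕ).1))
  · -- injective
    rintro ⟨⟨n1, k1⟩, hx1⟩ ⟨⟨n2, k2⟩, hx2⟩ hxy
    have hd1 : (n1, k1) ∈ dyadicSet := by
      by_contra hc
      exact hx1 (Set.indicator_of_notMem hc _)
    have hd2 : (n2, k2) ∈ dyadicSet := by
      by_contra hc
      exact hx2 (Set.indicator_of_notMem hc _)
    obtain ⟨hn1, hk1, hk1'⟩ := hd1
    obtain ⟨hn2, hk2, hk2'⟩ := hd2
    simp only [Prod.mk.injEq] at hxy
    obtain ⟨he1, he2⟩ := hxy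
    subst he1
    have hkk : k1 = k2 := by
      have hb1 : 1 ≤ k1 := hk1
      have hb2 : k1 ≤ 2^n1 := hk1'
      have hb3 : 1 ≤ k2 := hk2
      have hb4 : k2 ≤ 2^n1 := hk2'
      by_cases c1 : k1 = 2^n1 <;> by_cases c2 : k2 = 2^n1 <;>
        simp only [c1, c2, if_pos, if_neg, if_true, if_false] at he2 <;> omega
    exact Subtype.ext (by show ((n1, k1) : ℕ × ℕ) = ((n1, k2) : ℕ × ℕ); rw [hkk])
  · -- support ⊆ range
    rintro ⟨n, k'⟩ hp
    simp only [Function.mem_support, ne_eq] at hp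
    have hT : 1 ≤ n ∧ 2^n ≤ k' ∧ k' < 2^(n+1) := by
      by_contra hc
      exact hp (if_neg hc)
    obtain ⟨hn, hk'l, hk'u⟩ := hT
    rw [if_pos ⟨hn, hk'l, hk'u⟩] at hp
    have hpow : 2^(n+1) = 2*2^n := by rw [pow_succ]; ring
    by_cases hc : k' = 2^n
    · refine ⟨⟨(n, 2^n), ?_⟩, ?_⟩
      · simp only [Function.mem_support, ne_eq]
        have hmem : ((n, 2^n) : ℕ × ℕ) ∈ dyadicSet :=
          ⟨hn, Nat.one_le_two_pow, le_refl _⟩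
        rw [Set.indicator_of_mem hmem]
        simp only
        rw [← hc]
        exact hp
      · simp
        omega
    · refine ⟨⟨(n, k' - 2^n), ?_⟩, ?_⟩
      · simp only [Function.mem_support, ne_eq]
        have hmem : ((n, k' - 2^n) : ℕ × ℕ) ∈ dyadicSet :=
          ⟨hn, (by omega : 1 ≤ k' - 2^n), (by omega : k' - 2^n ≤ 2^n)⟩
        rw [Set.indicator_of_mem hmem]
        have hgg := hG n (k' - 2^n)
        rw [show k' - 2^n + 2^n = k' by omega] at hgg
        simp only
        rw [← hgg]
        exact hp
      · simp only
        rw [if_neg (by omega)]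
        simp only [Prod.mk.injEq]
        exact ⟨trivial, by omega⟩
  · -- value equality
    rintro ⟨⟨n, k⟩, hx⟩
    have hd : (n, k) ∈ dyadicSet := by
      by_contra hc
      exact hx (Set.indicator_of_notMem hc _)
    obtain ⟨hn, hk, hk'⟩ := hd
    have hn' : 1 ≤ n := hn
    have hkb1 : 1 ≤ k := hk
    have hkb2 : k ≤ 2^n := hk'
    have hpow : 2^(n+1) = 2*2^n := by rw [pow_succ]; ring
    have hmem : ((n, k) : ℕ × ℕ) ∈ dyadicSet := ⟨hn, hk, hk'⟩
    simp only
    rw [Set.indicator_of_mem hmem]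
    by_cases hc : k = 2^n
    · rw [if_pos hc, if_pos ⟨hn', le_refl _, (by omega : (2:ℕ)^n < 2^(n+1))⟩]
      simp only
      rw [hc]
    · rw [if_neg hc,
        if_pos ⟨hn', (by omega : (2:ℕ)^n ≤ k + 2^n), (by omega : k + 2^n < 2^(n+1))⟩]
      simp only
      rw [hG n k]

-- ## reindex tree: (ancestor, depth+offset) ↔ (node, depth)
lemma quad_reindex (F : ℕ → ℕ → ℕ → ℝ≥0∞) :
    (∑' pp : ℕ × ℕ, ∑' q : ℕ × ℕ,
      (if (1 ≤ pp.1 ∧ 2^pp.1 ≤ pp.2 ∧ pp.2 < 2^(pp.1+1)) ∧ q.2 < 2^q.1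
        then F (pp.1+q.1) (pp.2*2^q.1+q.2) q.1 else 0))
    = ∑' r : ℕ × ℕ, ∑' d : ℕ,
      (if (1 ≤ r.1 ∧ 2^r.1 ≤ r.2 ∧ r.2 < 2^(r.1+1)) ∧ d < r.1
        then F r.1 r.2 d else 0) := by
  classical
  rw [← ENNReal.tsum_prod'
    (f := fun x : (ℕ × ℕ) × (ℕ × ℕ) =>
      if (1 ≤ x.1.1 ∧ 2^x.1.1 ≤ x.1.2 ∧ x.1.2 < 2^(x.1.1+1)) ∧ x.2.2 < 2^x.2.1
        then F (x.1.1+x.2.1) (x.1.2*2^x.2.1+x.2.2) x.2.1 else 0),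
    ← ENNReal.tsum_prod'
    (f := fun y : (ℕ × ℕ) × ℕ =>
      if (1 ≤ y.1.1 ∧ 2^y.1.1 ≤ y.1.2 ∧ y.1.2 < 2^(y.1.1+1)) ∧ y.2 < y.1.1
        then F y.1.1 y.1.2 y.2 else 0)]
  apply tsum_eq_tsum_of_ne_zero_bij
    (i := fun y => (((y : (ℕ × ℕ) × ℕ).1.1 - (y : (ℕ × ℕ) × ℕ).2,
        (y : (ℕ × ℕ) × ℕ).1.2 / 2^(y : (ℕ × ℕ) × ℕ).2),
      ((y : (ℕ × ℕ) × ℕ).2, (y : (ℕ × ℕ) × ℕ).1.2 % 2^(y : (ℕ × ℕ) × ℕ).2)))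
  · -- injective
    rintro ⟨⟨⟨m1, j1⟩, d1⟩, hy1⟩ ⟨⟨⟨m2, j2⟩, d2⟩, hy2⟩ hxy
    have hc1 : (1 ≤ m1 ∧ 2^m1 ≤ j1 ∧ j1 < 2^(m1+1)) ∧ d1 < m1 := by
      by_contra hc; exact hy1 (if_neg hc)
    have hc2 : (1 ≤ m2 ∧ 2^m2 ≤ j2 ∧ j2 < 2^(m2+1)) ∧ d2 < m2 := by
      by_contra hc; exact hy2 (if_neg hc)
    simp only [Prod.mk.injEq] at hxy
    obtain ⟨⟨hsub, hdiv⟩, hd, hmod⟩ := hxy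
    subst hd
    have hm : m1 = m2 := by omega
    subst hm
    have hjj : j1 = j2 := by
      rw [← Nat.div_add_mod j1 (2^d1), ← Nat.div_add_mod j2 (2^d1), hdiv, hmod]
    exact Subtype.ext
      (by show (((m1, j1), d1) : (ℕ × ℕ) × ℕ) = (((m1, j2), d1) : (ℕ × ℕ) × ℕ); rw [hjj])
  · -- support ⊆ range
    rintro ⟨⟨n, k⟩, ⟨d, i⟩⟩ hp
    simp only [Function.mem_support, ne_eq] at hp
    have hc : (1 ≤ n ∧ 2^n ≤ k ∧ k < 2^(n+1)) ∧ i < 2^d := by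
      by_contra hc; exact hp (if_neg hc)
    obtain ⟨⟨hn, hkl, hku⟩, hi⟩ := hc
    rw [if_pos ⟨⟨hn, hkl, hku⟩, hi⟩] at hp
    have h2d : 0 < 2^d := Nat.pow_pos (by norm_num)
    have hTl : 2^(n+d) ≤ k*2^d+i := by
      rw [pow_add]
      calc 2^n * 2^d ≤ k * 2^d := Nat.mul_le_mul_right _ hkl
        _ ≤ k * 2^d + i := Nat.le_add_right _ _
    have hTu : k*2^d+i < 2^(n+d+1) := by
      have e1 : 2^(n+d+1) = 2^(n+1) * 2^d := by
        rw [← pow_add]; congr 1; omega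
      rw [e1]
      calc k*2^d+i < (k+1)*2^d := by
            rw [add_one_mul]; omega
        _ ≤ 2^(n+1)*2^d := Nat.mul_le_mul_right _ (by omega)
    have hdiv : (k*2^d+i) / 2^d = k := by
      rw [mul_comm k (2^d), Nat.mul_add_div h2d, Nat.div_eq_of_lt hi, add_zero]
    have hmod : (k*2^d+i) % 2^d = i := by
      rw [Nat.mul_add_mod', Nat.mod_eq_of_lt hi]
    refine ⟨⟨((n+d, k*2^d+i), d), ?_⟩, ?_⟩
    · simp only [Function.mem_support, ne_eq]
      rw [if_pos ⟨⟨by omega, hTl, hTu⟩, by omega⟩]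
      exact hp
    · simp only [Prod.mk.injEq]
      exact ⟨⟨by omega, hdiv⟩, trivial, hmod⟩
  · -- value equality
    rintro ⟨⟨⟨m, j⟩, d⟩, hy⟩
    have hc : (1 ≤ m ∧ 2^m ≤ j ∧ j < 2^(m+1)) ∧ d < m := by
      by_contra hc; exact hy (if_neg hc)
    obtain ⟨⟨hm, hjl, hju⟩, hdm⟩ := hc
    have h2d : 0 < 2^d := Nat.pow_pos (by norm_num)
    have e1 : 2^(m-d) * 2^d = 2^m := by rw [← pow_add]; congr 1; omega
    have e2 : 2^(m-d+1) * 2^d = 2^(m+1) := by rw [← pow_add]; congr 1; omega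
    have hTl : 2^(m-d) ≤ j / 2^d := by
      rw [Nat.le_div_iff_mul_le h2d, e1]; exact hjl
    have hTu : j / 2^d < 2^(m-d+1) := by
      rw [Nat.div_lt_iff_lt_mul h2d, e2]; exact hju
    have hmod : j % 2^d < 2^d := Nat.mod_lt _ h2d
    simp only
    rw [if_pos ⟨⟨by omega, hTl, hTu⟩, hmod⟩, if_pos ⟨⟨hm, hjl, hju⟩, hdm⟩]
    congr 1
    · omega
    · rw [mul_comm (j / 2^d) (2^d)]
      exact Nat.div_add_mod j (2^d)


/-- **Lemma 3.3.** Let `h : [0,∞) → [0,∞)` be increasing with `h(0) = 0`, with `t ↦ h(t^ε)`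
concave and `t ↦ h(t^p)` convex for some `ε ∈ (0,1)`, `p ≥ 1`. Then there is `B > 0`,
depending only on `ε` and `p`, such that for every positive Borel measure `μ` on `𝔻`:
`Σ_{n,k} h(μ(W(I_{n,k}))/|I_{n,k}|) ≤ Σ_{n,k} h(B·μ(R(I_{n,k}))/|I_{n,k}|)`. -/
theorem window_to_inner_half_sum
    (ε p : ℝ) (hε : ε ∈ Set.Ioo (0:ℝ) 1) (hp : 1 ≤ p) :
    ∃ B : ℝ, 0 < B ∧
      ∀ h : ℝ → ℝ, MonotoneOn h (Set.Ici 0) → h 0 = 0 → (∀ t ∈ Set.Ici (0:ℝ), 0 ≤ h t) →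
        ConcaveOn ℝ (Set.Ici 0) (fun t => h (t ^ ε)) →
        ConvexOn ℝ (Set.Ici 0) (fun t => h (t ^ p)) →
        ∀ μ : Measure ℂ, μ unitDiscᶜ = 0 →
          (∑' q : dyadicSet,
              ENNReal.ofReal (h ((μ (Wwin (q : ℕ × ℕ).1 (q : ℕ × ℕ).2)).toReal /
                arcLen (q : ℕ × ℕ).1))) ≤
            ∑' q : dyadicSet,
              ENNReal.ofReal (h (B * (μ (Rwin (q : ℕ × ℕ).1 (q : ℕ × ℕ).2)).toReal /
                arcLen (q : ℕ × ℕ).1)) := by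

  classical
  obtain ⟨hε0, hε1⟩ := hε
  have hp0 : 0 < p := lt_of_lt_of_le one_pos hp
  set s : ℝ := (1 - ε/2)/(1-ε) with hs_def
  have hs1 : 1 < s := by
    rw [hs_def, lt_div_iff₀ (by linarith)]
    linarith
  set τ : ℝ := (2:ℝ)^(-s) with hτ_def
  have hτ0 : 0 < τ := Real.rpow_pos_of_pos (by norm_num) _
  have hτ2 : 2*τ < 1 := by
    have h1 : τ < (2:ℝ)^(-(1:ℝ)) :=
      Real.rpow_lt_rpow_of_exponent_lt (by norm_num) (by linarith)
    rw [Real.rpow_neg_one] at h1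
    norm_num at h1
    linarith
  set c : ℝ := 1 - 2*τ with hc_def
  have hc0 : 0 < c := by rw [hc_def]; linarith
  have hc1 : c ≤ 1 := by rw [hc_def]; linarith
  set C : ℝ := c^(ε-1) with hC_def
  have hC1 : 1 ≤ C := by
    rw [hC_def]
    calc (1:ℝ) = c^(0:ℝ) := (Real.rpow_zero c).symm
      _ ≤ c^(ε-1) := Real.rpow_le_rpow_of_exponent_ge hc0 hc1 (by linarith)
  have hC0 : 0 < C := lt_of_lt_of_le one_pos hC1
  set η : ℝ := (2:ℝ)^(-(ε/2)) with hη_def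
  have hη0 : 0 < η := Real.rpow_pos_of_pos (by norm_num) _
  have hη1 : η < 1 := Real.rpow_lt_one_of_one_lt_of_neg (by norm_num) (by linarith)
  set A : ℝ := (1 - η^(1/p))⁻¹ with hA_def
  have hρ0 : 0 < η^(1/p) := Real.rpow_pos_of_pos hη0 _
  have hρ1 : η^(1/p) < 1 := Real.rpow_lt_one hη0.le hη1 (by positivity)
  have hA1 : 1 ≤ A := by
    rw [hA_def]
    exact (one_le_inv₀ (by linarith)).2 (by linarith)
  have hA0 : 0 < A := lt_of_lt_of_le one_pos hA1
  have hApos : 0 < A^p := Real.rpow_pos_of_pos hA0 _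
  refine ⟨C * A^p, mul_pos hC0 hApos, ?_⟩
  intro h hmono h0 hnn hconc hconv μ hμ
  -- the exponent identity
  have hsε : s * (1-ε) = 1 - ε/2 := by
    rw [hs_def, div_mul_cancel₀ _ (by linarith : (1:ℝ)-ε ≠ 0)]
  have hid : ∀ n d : ℕ, (c*τ^d)^(ε-1) * ((2:ℝ)^n/(2*Real.pi))
      = C*η^d*((2:ℝ)^(n+d)/(2*Real.pi)) := by
    intro n d
    have htd : ((τ^d : ℝ))^(ε-1) = (2:ℝ)^(s*(1-ε)*(d:ℝ)) := by
      rw [hτ_def, ← Real.rpow_natCast ((2:ℝ)^(-s)) d,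
        ← Real.rpow_mul (by norm_num : (0:ℝ) ≤ 2),
        ← Real.rpow_mul (by norm_num : (0:ℝ) ≤ 2)]
      congr 1
      ring
    have hηd : ((η^d : ℝ)) = (2:ℝ)^(-(ε/2)*(d:ℝ)) := by
      rw [hη_def, ← Real.rpow_natCast ((2:ℝ)^(-(ε/2))) d,
        ← Real.rpow_mul (by norm_num : (0:ℝ) ≤ 2)]
    have h2d : ((2:ℝ))^(d:ℕ) = (2:ℝ)^((d:ℕ):ℝ) := (Real.rpow_natCast 2 d).symm
    have hexp : (2:ℝ)^(s*(1-ε)*(d:ℝ)) = (2:ℝ)^(-(ε/2)*(d:ℝ)) * (2:ℝ)^((d:ℕ):ℝ) := by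
      rw [← Real.rpow_add (by norm_num : (0:ℝ) < 2)]
      congr 1
      rw [hsε]
      ring
    rw [Real.mul_rpow hc0.le (pow_nonneg hτ0.le d), htd, hηd, ← hC_def, pow_add, h2d,
      hexp]
    ring
  -- reindex LHS and RHS to heap form
  have hLHS := heap_reindex
    (fun n k => ENNReal.ofReal (h ((μ (Wwin n k)).toReal / arcLen n)))
    (fun n k => by simp only [Wwin_shift])
  have hRHS := heap_reindex
    (fun n k => ENNReal.ofReal (h ((C*A^p) * (μ (Rwin n k)).toReal / arcLen n)))
    (fun n k => by simp only [Rwin_shift])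
  rw [hLHS, hRHS]
  -- step 3: per-node bound
  have step3 : ∀ pp : ℕ × ℕ,
      (if 1 ≤ pp.1 ∧ 2^pp.1 ≤ pp.2 ∧ pp.2 < 2^(pp.1+1)
        then ENNReal.ofReal (h ((μ (Wwin pp.1 pp.2)).toReal / arcLen pp.1)) else 0)
      ≤ ∑' q : ℕ × ℕ,
        (if (1 ≤ pp.1 ∧ 2^pp.1 ≤ pp.2 ∧ pp.2 < 2^(pp.1+1)) ∧ q.2 < 2^q.1
          then ENNReal.ofReal (h (C * η^q.1 *
            ((μ (Rwin (pp.1+q.1) (pp.2*2^q.1+q.2))).toReal / arcLen (pp.1+q.1))))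
          else 0) := by
    intro pp
    by_cases hT : 1 ≤ pp.1 ∧ 2^pp.1 ≤ pp.2 ∧ pp.2 < 2^(pp.1+1)
    · rw [if_pos hT]
      have hb := node_bound hε0 hε1 hmono h0 hnn hconc μ pp.1 pp.2 hT.1
        c τ C η hc0 hτ0 hτ2 hc_def (hid pp.1)
      refine le_trans hb (le_of_eq (tsum_congr fun q => ?_))
      by_cases hq : q.2 < 2^q.1
      · rw [if_pos hq, if_pos ⟨hT, hq⟩]
      · rw [if_neg hq, if_neg (fun hcon => hq hcon.2)]
    · rw [if_neg hT]
      exact zero_le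
  -- step 4: reindex the double sum
  have step4 := quad_reindex
    (fun m j d => ENNReal.ofReal (h (C * η^d * ((μ (Rwin m j)).toReal / arcLen m))))
  -- step 5: geometric tail
  have step5 : ∀ r : ℕ × ℕ,
      (∑' d : ℕ, if (1 ≤ r.1 ∧ 2^r.1 ≤ r.2 ∧ r.2 < 2^(r.1+1)) ∧ d < r.1
        then ENNReal.ofReal (h (C * η^d * ((μ (Rwin r.1 r.2)).toReal / arcLen r.1)))
        else 0)
      ≤ (if 1 ≤ r.1 ∧ 2^r.1 ≤ r.2 ∧ r.2 < 2^(r.1+1)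
        then ENNReal.ofReal (h ((C*A^p) * (μ (Rwin r.1 r.2)).toReal / arcLen r.1))
        else 0) := by
    intro r
    by_cases hT : 1 ≤ r.1 ∧ 2^r.1 ≤ r.2 ∧ r.2 < 2^(r.1+1)
    · rw [if_pos hT]
      have he : ∀ d : ℕ, (if (1 ≤ r.1 ∧ 2^r.1 ≤ r.2 ∧ r.2 < 2^(r.1+1)) ∧ d < r.1
          then ENNReal.ofReal (h (C * η^d * ((μ (Rwin r.1 r.2)).toReal / arcLen r.1)))
          else 0)
          = (if d < r.1
          then ENNReal.ofReal (h (C * η^d * ((μ (Rwin r.1 r.2)).toReal / arcLen r.1)))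
          else 0) := by
        intro d
        by_cases hd : d < r.1
        · rw [if_pos ⟨hT, hd⟩, if_pos hd]
        · rw [if_neg (fun hcon => hd hcon.2), if_neg hd]
      rw [tsum_congr he]
      rw [tsum_eq_sum (s := Finset.range r.1)
        (fun d hd => if_neg (by simpa using hd))]
      have he2 : ∀ d ∈ Finset.range r.1,
          (if d < r.1
          then ENNReal.ofReal (h (C * η^d * ((μ (Rwin r.1 r.2)).toReal / arcLen r.1)))
          else 0)
          = ENNReal.ofReal (h (C * η^d * ((μ (Rwin r.1 r.2)).toReal / arcLen r.1))) :=
        fun d hd => if_pos (Finset.mem_range.1 hd)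
      rw [Finset.sum_congr rfl he2]
      have hv : 0 ≤ (μ (Rwin r.1 r.2)).toReal / arcLen r.1 := by
        apply div_nonneg ENNReal.toReal_nonneg
        rw [arcLen]
        positivity
      have := geom_tail_bound hp hmono h0 hnn hconv C η hC0 hη0 hη1
        ((μ (Rwin r.1 r.2)).toReal / arcLen r.1) hv r.1
      rw [← hA_def] at this
      refine le_trans this (le_of_eq ?_)
      congr 1
      rw [mul_div_assoc]
    · have hz : ∀ d : ℕ, (if (1 ≤ r.1 ∧ 2^r.1 ≤ r.2 ∧ r.2 < 2^(r.1+1)) ∧ d < r.1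
          then ENNReal.ofReal (h (C * η^d * ((μ (Rwin r.1 r.2)).toReal / arcLen r.1)))
          else 0) = 0 := fun d => if_neg (fun hcon => hT hcon.1)
      rw [if_neg hT, tsum_congr hz, tsum_zero]
  calc (∑' pp : ℕ × ℕ, if 1 ≤ pp.1 ∧ 2^pp.1 ≤ pp.2 ∧ pp.2 < 2^(pp.1+1)
        then ENNReal.ofReal (h ((μ (Wwin pp.1 pp.2)).toReal / arcLen pp.1)) else 0)
      ≤ ∑' pp : ℕ × ℕ, ∑' q : ℕ × ℕ,
        (if (1 ≤ pp.1 ∧ 2^pp.1 ≤ pp.2 ∧ pp.2 < 2^(pp.1+1)) ∧ q.2 < 2^q.1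
          then ENNReal.ofReal (h (C * η^q.1 *
            ((μ (Rwin (pp.1+q.1) (pp.2*2^q.1+q.2))).toReal / arcLen (pp.1+q.1))))
          else 0) := ENNReal.tsum_le_tsum step3
    _ = ∑' r : ℕ × ℕ, ∑' d : ℕ,
        (if (1 ≤ r.1 ∧ 2^r.1 ≤ r.2 ∧ r.2 < 2^(r.1+1)) ∧ d < r.1
          then ENNReal.ofReal (h (C * η^d * ((μ (Rwin r.1 r.2)).toReal / arcLen r.1)))
          else 0) := step4
    _ ≤ ∑' r : ℕ × ℕ, (if 1 ≤ r.1 ∧ 2^r.1 ≤ r.2 ∧ r.2 < 2^(r.1+1)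
        then ENNReal.ofReal (h ((C*A^p) * (μ (Rwin r.1 r.2)).toReal / arcLen r.1))
        else 0) := ENNReal.tsum_le_tsum step5
end
end
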